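/- arXiv:1511.05239 — 7 statements merged into one kernel-verified Lean document; each statement's English description precedes it below -/
import Mathlib

section
/- Let Γ be a distance-regular graph with valency k ≥ 3, diameter D ≥ 2, and second-largest eigenvalue θ₁. If c₂ ≠ 1 and Γ contains an induced subgraph isomorphic to a generalized quadrangle GQ(s, c₂−1) for some positive integer s, then θ₁ ≤ (k − (a₁+1))/(c₂−1) − 1. -/
open Finset Matrix

/-- A distance-regular graph: a connected finite simple graph of diameter `D`
with intersection numbers `b i`, `c i`. -/
structure DRG where
  V : Type
  [fV : Fintype V]
  [dV : DecidableEq V]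
  G : SimpleGraph V
  [aV : DecidableRel G.Adj]
  conn : G.Connected
  D : ℕ
  b : ℕ → ℕ
  c : ℕ → ℕ
  diam_le : ∀ x y : V, G.dist x y ≤ D
  diam_eq : ∃ x y : V, G.dist x y = D
  c_eq : ∀ i : ℕ, 1 ≤ i → i ≤ D → ∀ x y : V, G.dist x y = i →
    ((G.neighborFinset y).filter (fun z => G.dist x z = i - 1)).card = c i
  b_eq : ∀ i : ℕ, i ≤ D → ∀ x y : V, G.dist x y = i →
    ((G.neighborFinset y).filter (fun z => G.dist x z = i + 1)).card = b i
  c_zero : c 0 = 0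
  b_last : b D = 0

attribute [instance] DRG.fV DRG.dV DRG.aV

namespace DRG

variable (Γ : DRG)

/-- The valency. -/
def k : ℕ := Γ.b 0

/-- The intersection numbers `a i = k - b i - c i`. -/
def a (i : ℕ) : ℕ := Γ.k - Γ.b i - Γ.c i

/-- The number of vertices. -/
def n : ℕ := Fintype.card Γ.V

/-- The adjacency matrix. -/
noncomputable def A : Matrix Γ.V Γ.V ℝ := Γ.G.adjMatrix ℝ

/-- The distance-`j` matrix. -/
noncomputable def Amat (j : ℕ) : Matrix Γ.V Γ.V ℝ :=
  Matrix.of (fun x y => if Γ.G.dist x y = j then (1 : ℝ) else 0)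

end DRG

/-- Spectral data of a distance-regular graph: its `D+1` distinct eigenvalues
`θ 0 > θ 1 > ⋯ > θ D`, the minimal idempotents `E i` of the Bose–Mesner algebra,
and the multiplicities `m i`. -/
structure SpecData (Γ : DRG) where
  θ : Fin (Γ.D + 1) → ℝ
  θ_anti : StrictAnti θ
  θ_ev : ∀ i, ∃ v : Γ.V → ℝ, v ≠ 0 ∧ Γ.A.mulVec v = θ i • v
  θ_all : ∀ μ : ℝ, (∃ v : Γ.V → ℝ, v ≠ 0 ∧ Γ.A.mulVec v = μ • v) → ∃ i, μ = θ i
  E : Fin (Γ.D + 1) → Matrix Γ.V Γ.V ℝ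
  E_symm : ∀ i, (E i)ᵀ = E i
  E_mul : ∀ i j, E i * E j = if i = j then E i else 0
  E_ne : ∀ i, E i ≠ 0
  E_sum : ∑ i, E i = 1
  E_eig : ∀ i, Γ.A * E i = θ i • E i
  E_zero : E 0 = ((Γ.n : ℝ))⁻¹ • Matrix.of (fun _ _ => (1 : ℝ))
  m : Fin (Γ.D + 1) → ℕ
  m_eq : ∀ i, (m i : ℝ) = (E i).trace

/-- `E i` is a light tail with associated minimal idempotent `E j`. -/
def LightTailWith {Γ : DRG} (S : SpecData Γ) (i j : Fin (Γ.D + 1)) : Prop :=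
  j ≠ 0 ∧ ∃ α β : ℝ, α ≠ 0 ∧ β ≠ 0 ∧
    Matrix.hadamard (S.E i) (S.E i) = α • S.E 0 + β • S.E j

/-- `E i` is a light tail. -/
def IsLightTail {Γ : DRG} (S : SpecData Γ) (i : Fin (Γ.D + 1)) : Prop :=
  ∃ j, LightTailWith S i j

/-- `u` is the standard sequence of the eigenvalue `θ`. -/
def StdSeq (Γ : DRG) (θ : ℝ) (u : ℕ → ℝ) : Prop :=
  u 0 = 1 ∧ u 1 = θ / (Γ.k : ℝ) ∧
  ∀ i : ℕ, 1 ≤ i → i ≤ Γ.D →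
    (Γ.c i : ℝ) * u (i - 1) + (Γ.a i : ℝ) * u i + (Γ.b i : ℝ) * u (i + 1) = θ * u i

/-- Data witnessing that `Γ` is geometric: a collection of Delsarte cliques
(cliques of size `a₁ + 2`) such that every edge lies in a unique member, together
with the well-defined clique-distance parameters `γ i = |Γ_i(x) ∩ C|`. -/
structure GeomData (Γ : DRG) where
  cliques : Set (Finset Γ.V)
  isClique : ∀ C ∈ cliques, Γ.G.IsClique (C : Set Γ.V)
  card_eq : ∀ C ∈ cliques, C.card = Γ.a 1 + 2
  edge_unique : ∀ x y : Γ.V, Γ.G.Adj x y →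
    ∃! C : Finset Γ.V, C ∈ cliques ∧ x ∈ C ∧ y ∈ C
  γ : ℕ → ℕ
  γ_eq : ∀ (i : ℕ) (x : Γ.V), ∀ C ∈ cliques,
    (∀ y ∈ C, i ≤ Γ.G.dist x y) → (∃ y ∈ C, Γ.G.dist x y = i) →
    (C.filter (fun z => Γ.G.dist x z = i)).card = γ i

/-- A graph contains no induced `K_{1,1,2}`. -/
def K112Free {W : Type} (H : SimpleGraph W) : Prop :=
  ¬ ∃ a b c d : W, H.Adj a b ∧ H.Adj a c ∧ H.Adj a d ∧ H.Adj b c ∧ H.Adj b d ∧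
    c ≠ d ∧ ¬ H.Adj c d

/-- A generalized quadrangle of order `(s,t)`: a `K_{1,1,2}`-free distance-regular
graph of diameter `2` with intersection array `{(t+1)s, ts; 1, t+1}`. -/
def IsGQ (s t : ℕ) (Δ : DRG) : Prop :=
  Δ.D = 2 ∧ K112Free Δ.G ∧ Δ.b 0 = (t + 1) * s ∧ Δ.b 1 = t * s ∧
    Δ.c 1 = 1 ∧ Δ.c 2 = t + 1

/-- `Γ` contains an induced subgraph which is a generalized quadrangle `GQ(s,t)`. -/
def ContainsInducedGQ (Γ : DRG) (s t : ℕ) : Prop :=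
  ∃ Δ : DRG, IsGQ s t Δ ∧ Nonempty (Δ.G ↪g Γ.G)

/-- A set of vertices is strongly closed. -/
def StronglyClosed (Γ : DRG) (S : Set Γ.V) : Prop :=
  ∀ x ∈ S, ∀ y ∈ S, ∀ z : Γ.V,
    Γ.G.dist x z + Γ.G.dist z y ≤ Γ.G.dist x y + 1 → z ∈ S

/-- `Γ` is `m`-bounded: every pair of vertices at distance `i ≤ m` lies in a
strongly closed subgraph of diameter `i`. -/
def MBounded (Γ : DRG) (m : ℕ) : Prop :=
  ∀ i : ℕ, 1 ≤ i → i ≤ m → ∀ x y : Γ.V, Γ.G.dist x y = i →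
    ∃ S : Set Γ.V, x ∈ S ∧ y ∈ S ∧ StronglyClosed Γ S ∧
      (∀ u ∈ S, ∀ v ∈ S, Γ.G.dist u v ≤ i) ∧ (∃ u ∈ S, ∃ v ∈ S, Γ.G.dist u v = i)

/-- The neighbourhood of every vertex induces a disjoint union of `s`-cliques. -/
def LocallyUnionCliques (Γ : DRG) (s : ℕ) : Prop :=
  ∀ v : Γ.V, ∃ P : Finset (Finset Γ.V),
    (∀ p ∈ P, p ⊆ Γ.G.neighborFinset v ∧ p.card = s ∧ Γ.G.IsClique (p : Set Γ.V)) ∧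
    (∀ x ∈ Γ.G.neighborFinset v, ∃! p, p ∈ P ∧ x ∈ p) ∧
    (∀ p ∈ P, ∀ q ∈ P, p ≠ q → ∀ x ∈ p, ∀ y ∈ q, ¬ Γ.G.Adj x y)
namespace DRGaux

open SimpleGraph

variable (Γ : DRG)

lemma dist_zero_iff (x y : Γ.V) : Γ.G.dist x y = 0 ↔ x = y :=
  Γ.conn.dist_eq_zero_iff

lemma dist_one_of_adj {x y : Γ.V} (h : Γ.G.Adj x y) : Γ.G.dist x y = 1 :=
  SimpleGraph.dist_eq_one_iff_adj.mpr h

lemma adj_of_dist_one {x y : Γ.V} (h : Γ.G.dist x y = 1) : Γ.G.Adj x y :=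
  SimpleGraph.dist_eq_one_iff_adj.mp h

lemma degree_eq (y : Γ.V) : (Γ.G.neighborFinset y).card = Γ.k := by
  have h := Γ.b_eq 0 (Nat.zero_le _) y y (SimpleGraph.dist_self)
  rw [Finset.filter_true_of_mem] at h
  · exact h
  · intro z hz
    exact dist_one_of_adj Γ ((SimpleGraph.mem_neighborFinset _ _ _).mp hz)

lemma exists_adj_dist {x y : Γ.V} {n : ℕ} (h : Γ.G.dist x y = n + 1) :
    ∃ z, Γ.G.Adj z y ∧ Γ.G.dist x z = n := by
  obtain ⟨p, hp⟩ := Γ.conn.exists_walk_length_eq_dist x y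
  rw [h] at hp
  cases hq : p.reverse with
  | nil =>
    have := congrArg SimpleGraph.Walk.length hq
    rw [SimpleGraph.Walk.length_reverse, hp] at this
    simp at this
  | cons ha q =>
    rename_i z
    have hlen : q.length = n := by
      have := congrArg SimpleGraph.Walk.length hq
      rw [SimpleGraph.Walk.length_reverse, hp] at this
      simpa using this.symm
    refine ⟨z, ha.symm, le_antisymm ?_ ?_⟩
    · calc Γ.G.dist x z ≤ q.reverse.length := SimpleGraph.dist_le _
        _ = n := by simp [hlen]
    · have htri := Γ.conn.dist_triangle (u := x) (v := z) (w := y)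
      have hzy : Γ.G.dist z y = 1 := dist_one_of_adj Γ ha.symm
      omega

lemma exists_dist_eq : ∀ (d : ℕ) (x y : Γ.V), Γ.G.dist x y = d →
    ∀ m ≤ d, ∃ z, Γ.G.dist x z = m := by
  intro d
  induction d with
  | zero => intro x y _ m hm
            exact ⟨x, by simpa [Nat.le_zero.mp hm] using SimpleGraph.dist_self (G := Γ.G)⟩
  | succ n ih =>
    intro x y hd m hm
    rcases Nat.lt_or_ge m (n+1) with hlt | hge
    · obtain ⟨z, _, hz⟩ := exists_adj_dist Γ hd
      exact ih x z hz m (by omega)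
    · exact ⟨y, by omega⟩

lemma c_one (hD : 1 ≤ Γ.D) : Γ.c 1 = 1 := by
  obtain ⟨x0, y0, hxy⟩ := Γ.diam_eq
  obtain ⟨z, hz⟩ := exists_dist_eq Γ Γ.D x0 y0 hxy 1 hD
  have h := Γ.c_eq 1 le_rfl hD x0 z hz
  rw [show (Γ.G.neighborFinset z).filter (fun w => Γ.G.dist x0 w = 1 - 1) = {x0} from ?_] at h
  · simpa using h.symm
  · ext w
    simp only [Finset.mem_filter, SimpleGraph.mem_neighborFinset, Finset.mem_singleton]
    constructor
    · rintro ⟨_, hw⟩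
      exact ((dist_zero_iff Γ x0 w).mp hw).symm
    · rintro rfl
      exact ⟨(adj_of_dist_one Γ hz).symm, (dist_zero_iff Γ w w).mpr rfl⟩

end DRGaux
namespace DRGaux

open SimpleGraph

variable (Γ : DRG)

lemma dist_cases {x y z : Γ.V} {j : ℕ} (h1 : 1 ≤ j) (hd : Γ.G.dist x y = j)
    (hz : z ∈ Γ.G.neighborFinset y) :
    Γ.G.dist x z = j - 1 ∨ Γ.G.dist x z = j ∨ Γ.G.dist x z = j + 1 := by
  have hadj : Γ.G.Adj y z := (SimpleGraph.mem_neighborFinset _ _ _).mp hz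
  have h1' : Γ.G.dist y z = 1 := dist_one_of_adj Γ hadj
  have h2' : Γ.G.dist z y = 1 := by rw [SimpleGraph.dist_comm]; exact h1'
  have t1 := Γ.conn.dist_triangle (u := x) (v := y) (w := z)
  have t2 := Γ.conn.dist_triangle (u := x) (v := z) (w := y)
  omega

lemma filter_split {x y : Γ.V} {j : ℕ} (h1 : 1 ≤ j) (hd : Γ.G.dist x y = j) :
    ((Γ.G.neighborFinset y).filter (fun z => ¬ Γ.G.dist x z = j - 1 ∧ Γ.G.dist x z = j)
      = (Γ.G.neighborFinset y).filter (fun z => Γ.G.dist x z = j)) ∧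
    ((Γ.G.neighborFinset y).filter (fun z => ¬ Γ.G.dist x z = j - 1 ∧ ¬ Γ.G.dist x z = j)
      = (Γ.G.neighborFinset y).filter (fun z => Γ.G.dist x z = j + 1)) := by
  constructor
  · apply Finset.filter_congr
    intro z hz
    simp only [iff_self_and, and_iff_right_iff_imp]
    intro h; omega
  · apply Finset.filter_congr
    intro z hz
    have := dist_cases Γ h1 hd hz
    constructor
    · rintro ⟨ha, hb'⟩; omega
    · intro h; omega

/-- The three distance classes partition the neighborhood. -/
lemma card_partition {x y : Γ.V} {j : ℕ} (h1 : 1 ≤ j) (h2 : j ≤ Γ.D)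
    (hd : Γ.G.dist x y = j) :
    Γ.c j + ((Γ.G.neighborFinset y).filter (fun z => Γ.G.dist x z = j)).card + Γ.b j
      = Γ.k := by
  classical
  have hc := Γ.c_eq j h1 h2 x y hd
  have hb := Γ.b_eq j h2 x y hd
  have hsplit1 := Finset.card_filter_add_card_filter_not
    (s := Γ.G.neighborFinset y) (p := fun z => Γ.G.dist x z = j - 1)
  have hsplit2 := Finset.card_filter_add_card_filter_not
    (s := (Γ.G.neighborFinset y).filter (fun z => ¬ Γ.G.dist x z = j - 1))
    (p := fun z => Γ.G.dist x z = j)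
  rw [Finset.filter_filter, Finset.filter_filter, (filter_split Γ h1 hd).1,
    (filter_split Γ h1 hd).2] at hsplit2
  have hdeg := degree_eq Γ y
  omega

lemma cb_le_k {x y : Γ.V} {j : ℕ} (h1 : 1 ≤ j) (h2 : j ≤ Γ.D)
    (hd : Γ.G.dist x y = j) : Γ.c j + Γ.b j ≤ Γ.k := by
  have := card_partition Γ h1 h2 hd
  omega

/-- Main counting tool: sum over the neighborhood of a function of distance. -/
lemma sum_nbr (g : ℕ → ℝ) {x y : Γ.V} {j : ℕ} (h1 : 1 ≤ j) (h2 : j ≤ Γ.D)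
    (hd : Γ.G.dist x y = j) :
    ∑ z ∈ Γ.G.neighborFinset y, g (Γ.G.dist x z)
      = (Γ.c j : ℝ) * g (j - 1)
        + ((Γ.k : ℝ) - Γ.c j - Γ.b j) * g j + (Γ.b j : ℝ) * g (j + 1) := by
  classical
  have hsum1 := Finset.sum_filter_add_sum_filter_not (Γ.G.neighborFinset y)
    (fun z => Γ.G.dist x z = j - 1) (fun z => g (Γ.G.dist x z))
  have hsum2 := Finset.sum_filter_add_sum_filter_not
    ((Γ.G.neighborFinset y).filter (fun z => ¬ Γ.G.dist x z = j - 1))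
    (fun z => Γ.G.dist x z = j) (fun z => g (Γ.G.dist x z))
  rw [Finset.filter_filter, Finset.filter_filter, (filter_split Γ h1 hd).1,
    (filter_split Γ h1 hd).2] at hsum2
  have c1 : ∑ z ∈ (Γ.G.neighborFinset y).filter (fun z => Γ.G.dist x z = j - 1),
      g (Γ.G.dist x z) = (Γ.c j : ℝ) * g (j - 1) := by
    rw [Finset.sum_congr rfl (fun z hz => by
      rw [(Finset.mem_filter.mp hz).2]), Finset.sum_const,
      Γ.c_eq j h1 h2 x y hd, nsmul_eq_mul]
  have c2 : ∑ z ∈ (Γ.G.neighborFinset y).filter (fun z => Γ.G.dist x z = j),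
      g (Γ.G.dist x z) = ((Γ.k : ℝ) - Γ.c j - Γ.b j) * g j := by
    rw [Finset.sum_congr rfl (fun z hz => by
      rw [(Finset.mem_filter.mp hz).2]), Finset.sum_const, nsmul_eq_mul]
    have hcard := card_partition Γ h1 h2 hd
    have hcast : ((((Γ.G.neighborFinset y).filter (fun z => Γ.G.dist x z = j)).card : ℝ))
        = (Γ.k : ℝ) - Γ.c j - Γ.b j := by
      have h' : ((Γ.c j + ((Γ.G.neighborFinset y).filter (fun z => Γ.G.dist x z = j)).card + Γ.b j : ℕ) : ℝ) = ((Γ.k : ℕ) : ℝ) := by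
        exact_mod_cast congrArg Nat.cast hcard
      push_cast at h'
      linarith
    rw [hcast]
  have c3 : ∑ z ∈ (Γ.G.neighborFinset y).filter (fun z => Γ.G.dist x z = j + 1),
      g (Γ.G.dist x z) = (Γ.b j : ℝ) * g (j + 1) := by
    rw [Finset.sum_congr rfl (fun z hz => by
      rw [(Finset.mem_filter.mp hz).2]), Finset.sum_const,
      Γ.b_eq j h2 x y hd, nsmul_eq_mul]
  rw [← hsum1, ← hsum2, c1, c2, c3]
  ring

end DRGaux
namespace DRGaux

open SimpleGraph Polynomial

variable (Γ : DRG)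

lemma amat_apply (i : ℕ) (x y : Γ.V) :
    Γ.Amat i x y = if Γ.G.dist x y = i then (1 : ℝ) else 0 := rfl

lemma amat_zero : Γ.Amat 0 = 1 := by
  ext x y
  rw [amat_apply, Matrix.one_apply]
  by_cases h : x = y
  · simp [h, SimpleGraph.dist_self]
  · have hne : Γ.G.dist x y ≠ 0 := fun hh => h ((dist_zero_iff Γ x y).mp hh)
    simp [h, hne]

lemma amat_one : Γ.Amat 1 = Γ.A := by
  ext x y
  rw [amat_apply, DRG.A, SimpleGraph.adjMatrix_apply]
  by_cases h : Γ.G.Adj x y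
  · simp [h, dist_one_of_adj Γ h]
  · simp [h, fun hh => h (adj_of_dist_one Γ hh)]

lemma amat_big {j : ℕ} (h : Γ.D < j) : Γ.Amat j = 0 := by
  ext x y
  rw [amat_apply]
  have := Γ.diam_le x y
  simp only [Matrix.zero_apply, ite_eq_right_iff]
  intro hh; omega

/-- membership in the span of the distance matrices -/
def InSpan (M : Matrix Γ.V Γ.V ℝ) : Prop :=
  ∃ α : ℕ → ℝ, M = ∑ i ∈ Finset.range (Γ.D + 1), α i • Γ.Amat i

lemma inSpan_zero : InSpan Γ 0 :=
  ⟨fun _ => 0, by simp⟩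

lemma inSpan_add {M N} (hM : InSpan Γ M) (hN : InSpan Γ N) : InSpan Γ (M + N) := by
  obtain ⟨α, hα⟩ := hM; obtain ⟨β, hβ⟩ := hN
  exact ⟨fun i => α i + β i, by rw [hα, hβ, ← Finset.sum_add_distrib]; simp [add_smul]⟩

lemma inSpan_smul {M} (r : ℝ) (hM : InSpan Γ M) : InSpan Γ (r • M) := by
  obtain ⟨α, hα⟩ := hM
  refine ⟨fun i => r * α i, by rw [hα, Finset.smul_sum]; simp [smul_smul]⟩

lemma inSpan_amat {j : ℕ} (h : j ≤ Γ.D) : InSpan Γ (Γ.Amat j) := by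
  refine ⟨fun i => if i = j then 1 else 0, ?_⟩
  rw [Finset.sum_eq_single j]
  · simp
  · intro i _ hij; simp [hij]
  · intro hj; exact absurd (Finset.mem_range.mpr (by omega)) hj

lemma inSpan_one : InSpan Γ 1 := by
  rw [← amat_zero]; exact inSpan_amat Γ (Nat.zero_le _)

/-- The key recurrence for distance matrices. -/
lemma amat_mul_A {i : ℕ} (h1 : 1 ≤ i) :
    Γ.Amat i * Γ.A
      = (Γ.c (i + 1) : ℝ) • Γ.Amat (i + 1)
        + ((Γ.k : ℝ) - Γ.c i - Γ.b i) • Γ.Amat i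
        + (Γ.b (i - 1) : ℝ) • Γ.Amat (i - 1) := by
  ext x y
  have hL : (Γ.Amat i * Γ.A) x y
      = ∑ z ∈ Γ.G.neighborFinset y, Γ.Amat i x z := by
    rw [DRG.A, SimpleGraph.mul_adjMatrix_apply]
  have hLe : (Γ.Amat i * Γ.A) x y
      = ∑ z ∈ Γ.G.neighborFinset y,
          (fun d => if d = i then (1 : ℝ) else 0) (Γ.G.dist x z) := by
    rw [hL]; rfl
  have hR : ((Γ.c (i + 1) : ℝ) • Γ.Amat (i + 1)
        + ((Γ.k : ℝ) - Γ.c i - Γ.b i) • Γ.Amat i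
        + (Γ.b (i - 1) : ℝ) • Γ.Amat (i - 1)) x y
      = (Γ.c (i + 1) : ℝ) * (if Γ.G.dist x y = i + 1 then 1 else 0)
        + ((Γ.k : ℝ) - Γ.c i - Γ.b i) * (if Γ.G.dist x y = i then 1 else 0)
        + (Γ.b (i - 1) : ℝ) * (if Γ.G.dist x y = i - 1 then 1 else 0) := by
    simp [amat_apply]
  rw [hLe, hR]
  rcases Nat.eq_zero_or_pos (Γ.G.dist x y) with hj0 | hjpos
  · -- x = y
    have hxy : x = y := (dist_zero_iff Γ x y).mp hj0
    subst hxy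
    have hsum : ∑ z ∈ Γ.G.neighborFinset x,
        (fun d => if d = i then (1 : ℝ) else 0) (Γ.G.dist x z)
        = ∑ _z ∈ Γ.G.neighborFinset x, (if 1 = i then (1 : ℝ) else 0) := by
      refine Finset.sum_congr rfl (fun z hz => ?_)
      simp only
      rw [dist_one_of_adj Γ ((SimpleGraph.mem_neighborFinset _ _ _).mp hz)]
    rw [hsum, Finset.sum_const, degree_eq, nsmul_eq_mul, hj0]
    by_cases hi1 : i = 1
    · subst hi1
      norm_num
      rw [DRG.k]
    · rw [if_neg (fun hh => hi1 hh.symm), if_neg (by omega : ¬ (0 = i + 1)),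
        if_neg (by omega : ¬ (0 = i)), if_neg (by omega : ¬ (0 = i - 1))]
      ring
  · have hjD := Γ.diam_le x y
    rw [sum_nbr Γ (fun d => if d = i then (1 : ℝ) else 0) hjpos hjD rfl]
    generalize hgen : Γ.G.dist x y = j at hjpos hjD ⊢
    by_cases hA : j = i
    · rw [if_neg (by omega : ¬ (j - 1 = i)), if_pos hA, if_neg (by omega : ¬ (j + 1 = i)),
        if_neg (by omega : ¬ (j = i + 1))]
      rw [if_neg (by omega : ¬ (j = i - 1)), hA]
      ring
    · by_cases hB : j = i + 1
      · rw [if_pos (by omega : j - 1 = i), if_neg hA, if_neg (by omega : ¬ (j + 1 = i)),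
          if_pos hB]
        rw [if_neg (by omega : ¬ (j = i - 1)), hB]
        ring
      · by_cases hC : j + 1 = i
        · rw [if_neg (by omega : ¬ (j - 1 = i)), if_neg hA, if_pos hC, if_neg hB]
          rw [if_pos (by omega : j = i - 1), show i - 1 = j by omega]
          ring
        · rw [if_neg (by omega : ¬ (j - 1 = i)), if_neg hA, if_neg hC, if_neg hB]
          rw [if_neg (by omega : ¬ (j = i - 1))]
          ring

lemma inSpan_mul_A (hD : 1 ≤ Γ.D) {M} (hM : InSpan Γ M) : InSpan Γ (M * Γ.A) := by
  obtain ⟨α, hα⟩ := hM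
  rw [hα, Finset.sum_mul]
  apply Finset.sum_induction _ (InSpan Γ) (fun a b => inSpan_add Γ) (inSpan_zero Γ)
  intro i hi
  rw [Finset.mem_range] at hi
  rw [smul_mul_assoc]
  apply inSpan_smul
  rcases Nat.eq_zero_or_pos i with h0 | h0
  · subst h0
    rw [amat_zero, one_mul, ← amat_one]
    exact inSpan_amat Γ hD
  · rw [amat_mul_A Γ h0]
    apply inSpan_add
    apply inSpan_add
    · rcases Nat.lt_or_ge (i + 1) (Γ.D + 1) with hle | hgt
      · exact inSpan_smul Γ _ (inSpan_amat Γ (by omega))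
      · rw [amat_big Γ (by omega), smul_zero]; exact inSpan_zero Γ
    · exact inSpan_smul Γ _ (inSpan_amat Γ (by omega))
    · exact inSpan_smul Γ _ (inSpan_amat Γ (by omega))

lemma inSpan_pow (hD : 1 ≤ Γ.D) (n : ℕ) : InSpan Γ (Γ.A ^ n) := by
  induction n with
  | zero => rw [pow_zero]; exact inSpan_one Γ
  | succ n ih => rw [pow_succ]; exact inSpan_mul_A Γ hD ih

lemma inSpan_aeval (hD : 1 ≤ Γ.D) (p : ℝ[X]) : InSpan Γ (aeval Γ.A p) := by
  induction p using Polynomial.induction_on' with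
  | add p q hp hq => rw [map_add]; exact inSpan_add Γ hp hq
  | monomial n a =>
    rw [Polynomial.aeval_monomial, Algebra.algebraMap_eq_smul_one, smul_mul_assoc, one_mul]
    exact inSpan_smul Γ _ (inSpan_pow Γ hD n)

lemma span_entry (α : ℕ → ℝ) (M : Matrix Γ.V Γ.V ℝ)
    (h : M = ∑ i ∈ Finset.range (Γ.D + 1), α i • Γ.Amat i) (x y : Γ.V) :
    M x y = α (Γ.G.dist x y) := by
  rw [h, Matrix.sum_apply]
  rw [Finset.sum_eq_single (Γ.G.dist x y)]
  · simp [amat_apply]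
  · intro i _ hne
    simp only [Matrix.smul_apply, amat_apply, smul_eq_mul]
    rw [if_neg (fun hh => hne hh.symm)]
    ring
  · intro hmem
    exact absurd (Finset.mem_range.mpr (by have := Γ.diam_le x y; omega)) hmem

end DRGaux
namespace DRGaux

open SimpleGraph Polynomial

variable {Γ : DRG} (S : SpecData Γ)

lemma pow_mul_E (n : ℕ) (i : Fin (Γ.D + 1)) :
    Γ.A ^ n * S.E i = (S.θ i ^ n) • S.E i := by
  induction n with
  | zero => simp
  | succ n ih =>
    rw [pow_succ, mul_assoc, S.E_eig i, mul_smul_comm, ih, smul_smul, mul_comm, ← pow_succ]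

lemma aeval_mul_E (p : ℝ[X]) (i : Fin (Γ.D + 1)) :
    (aeval Γ.A p) * S.E i = (p.eval (S.θ i)) • S.E i := by
  induction p using Polynomial.induction_on' with
  | add p q hp hq => rw [map_add, add_mul, hp, hq, eval_add, add_smul]
  | monomial n a =>
    rw [aeval_monomial, Algebra.algebraMap_eq_smul_one, smul_mul_assoc, one_mul,
      smul_mul_assoc, pow_mul_E, eval_monomial, smul_smul]

/-- The polynomial with roots at all eigenvalues except `θ 1`. -/
noncomputable def qpoly : ℝ[X] :=
  ∏ j ∈ Finset.univ.erase (1 : Fin (Γ.D + 1)), (X - C (S.θ j))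

lemma qpoly_eval_ne : (qpoly S).eval (S.θ 1) ≠ 0 := by
  rw [qpoly, eval_prod]
  apply Finset.prod_ne_zero_iff.mpr
  intro j hj
  simp only [eval_sub, eval_X, eval_C]
  exact sub_ne_zero.mpr
    (fun h => (Finset.mem_erase.mp hj).1 (S.θ_anti.injective h).symm)

lemma qpoly_eval_zero {i : Fin (Γ.D + 1)} (hi : i ≠ 1) :
    (qpoly S).eval (S.θ i) = 0 := by
  rw [qpoly, eval_prod]
  apply Finset.prod_eq_zero (Finset.mem_erase.mpr ⟨hi, Finset.mem_univ i⟩)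
  simp

lemma aeval_qpoly : aeval Γ.A (qpoly S) = ((qpoly S).eval (S.θ 1)) • S.E 1 := by
  have h1 : aeval Γ.A (qpoly S) = aeval Γ.A (qpoly S) * ∑ i, S.E i := by
    rw [S.E_sum, mul_one]
  rw [h1, Finset.mul_sum, Finset.sum_eq_single (1 : Fin (Γ.D + 1))]
  · rw [aeval_mul_E]
  · intro i _ hi; rw [aeval_mul_E, qpoly_eval_zero S hi, zero_smul]
  · intro h; exact absurd (Finset.mem_univ _) h

lemma inSpan_E1 (hD : 1 ≤ Γ.D) : InSpan Γ (S.E 1) := by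
  have h := aeval_qpoly S
  have h1 := inSpan_aeval Γ hD (qpoly S)
  rw [h] at h1
  have h2 := inSpan_smul Γ ((qpoly S).eval (S.θ 1))⁻¹ h1
  rwa [smul_smul, inv_mul_cancel₀ (qpoly_eval_ne S), one_smul] at h2

lemma E_idem (i : Fin (Γ.D + 1)) : S.E i * S.E i = S.E i := by
  have := S.E_mul i i
  rwa [if_pos rfl] at this

lemma E_apply_symm (i : Fin (Γ.D + 1)) (x y : Γ.V) : S.E i x y = S.E i y x := by
  have := congrFun (congrFun (S.E_symm i) y) x
  rw [Matrix.transpose_apply] at this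
  exact this

lemma E_diag_eq_sum_sq (i : Fin (Γ.D + 1)) (x : Γ.V) :
    S.E i x x = ∑ v, (S.E i x v) ^ 2 := by
  conv_lhs => rw [← E_idem S i]
  rw [Matrix.mul_apply]
  refine Finset.sum_congr rfl fun v _ => ?_
  rw [E_apply_symm S i v x]
  ring

lemma E_diag_pos (i : Fin (Γ.D + 1)) : ∃ x : Γ.V, 0 < S.E i x x := by
  by_contra hcon
  push_neg at hcon
  apply S.E_ne i
  ext x y
  have h0 : S.E i x x = 0 := by
    have h1 := E_diag_eq_sum_sq S i x
    have h2 : 0 ≤ ∑ v, (S.E i x v) ^ 2 :=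
      Finset.sum_nonneg fun v _ => sq_nonneg _
    have := hcon x
    linarith [h1 ▸ h2]
  have hzero : ∑ v, (S.E i x v) ^ 2 = 0 := by
    rw [← E_diag_eq_sum_sq S i x]; exact h0
  have := (Finset.sum_eq_zero_iff_of_nonneg (fun v _ => sq_nonneg (S.E i x v))).mp
    hzero y (Finset.mem_univ y)
  simpa using pow_eq_zero_iff (n := 2) (by norm_num) |>.mp this

lemma E_quadform_nonneg (i : Fin (Γ.D + 1)) (χ : Γ.V → ℝ) :
    0 ≤ χ ⬝ᵥ ((S.E i).mulVec χ) := by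
  have h : (S.E i).mulVec χ = (S.E i).mulVec ((S.E i).mulVec χ) := by
    rw [Matrix.mulVec_mulVec, E_idem]
  rw [h, Matrix.dotProduct_mulVec]
  have h2 : χ ᵥ* S.E i = (S.E i).mulVec χ := by
    conv_lhs => rw [← S.E_symm i]
    rw [Matrix.vecMul_transpose]
  rw [h2, dotProduct]
  exact Finset.sum_nonneg fun u _ => mul_self_nonneg _

lemma theta_lt_k (hD : 1 ≤ Γ.D) : S.θ 1 < (Γ.k : ℝ) := by
  have h01 : (0 : Fin (Γ.D + 1)) < 1 := by
    rw [Fin.lt_def]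
    have : (1 : Fin (Γ.D + 1)).val = 1 % (Γ.D + 1) := Fin.val_one' _
    simp only [Fin.val_zero, this]
    rw [Nat.mod_eq_of_lt (by omega)]
    omega
  have hlt : S.θ 1 < S.θ 0 := S.θ_anti h01
  obtain ⟨v, hv0, hveq⟩ := S.θ_ev 0
  have : Nonempty Γ.V := Γ.conn.nonempty
  obtain ⟨x0, _, hx0⟩ := Finset.exists_max_image Finset.univ (fun x => |v x|)
    Finset.univ_nonempty
  have hvx0 : 0 < |v x0| := by
    rcases Function.ne_iff.mp hv0 with ⟨z, hz⟩
    have := hx0 z (Finset.mem_univ z)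
    have : 0 < |v z| := abs_pos.mpr hz
    linarith [hx0 z (Finset.mem_univ z)]
  have heval : (Γ.A.mulVec v) x0 = S.θ 0 * v x0 := by
    rw [hveq]; simp
  have hsum : (Γ.A.mulVec v) x0 = ∑ z ∈ Γ.G.neighborFinset x0, v z := by
    rw [DRG.A, SimpleGraph.adjMatrix_mulVec_apply]
  have habs : |S.θ 0| * |v x0| ≤ (Γ.k : ℝ) * |v x0| := by
    calc |S.θ 0| * |v x0| = |S.θ 0 * v x0| := (abs_mul _ _).symm
      _ = |∑ z ∈ Γ.G.neighborFinset x0, v z| := by rw [← heval, hsum]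
      _ ≤ ∑ z ∈ Γ.G.neighborFinset x0, |v z| := Finset.abs_sum_le_sum_abs _ _
      _ ≤ ∑ _z ∈ Γ.G.neighborFinset x0, |v x0| :=
          Finset.sum_le_sum fun z _ => hx0 z (Finset.mem_univ z)
      _ = (Γ.k : ℝ) * |v x0| := by
          rw [Finset.sum_const, degree_eq, nsmul_eq_mul]
  have hk : |S.θ 0| ≤ (Γ.k : ℝ) := le_of_mul_le_mul_right habs hvx0
  calc S.θ 1 < S.θ 0 := hlt
    _ ≤ |S.θ 0| := le_abs_self _
    _ ≤ (Γ.k : ℝ) := hk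

end DRGaux
namespace DRGaux

open SimpleGraph

variable (Δ : DRG)

lemma dist_two {x y : Δ.V} (hD2 : Δ.D = 2) (hne : x ≠ y) (hnadj : ¬ Δ.G.Adj x y) :
    Δ.G.dist x y = 2 := by
  have hle : Δ.G.dist x y ≤ 2 := hD2 ▸ Δ.diam_le x y
  have h0 : Δ.G.dist x y ≠ 0 := fun h => hne ((dist_zero_iff Δ x y).mp h)
  have h1 : Δ.G.dist x y ≠ 1 := fun h => hnadj (adj_of_dist_one Δ h)
  omega

lemma A_sq_apply (hD2 : Δ.D = 2) (x y : Δ.V) :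
    (Δ.A * Δ.A) x y
      = if x = y then (Δ.k : ℝ)
        else if Δ.G.Adj x y then ((Δ.k : ℝ) - Δ.c 1 - Δ.b 1) else (Δ.c 2 : ℝ) := by
  have hL : (Δ.A * Δ.A) x y = ∑ z ∈ Δ.G.neighborFinset y, Δ.A x z := by
    rw [DRG.A, SimpleGraph.mul_adjMatrix_apply]
  have hL2 : (Δ.A * Δ.A) x y
      = ∑ z ∈ Δ.G.neighborFinset y,
          (fun d => if d = 1 then (1 : ℝ) else 0) (Δ.G.dist x z) := by
    rw [hL]
    refine Finset.sum_congr rfl fun z _ => ?_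
    simp only [DRG.A, SimpleGraph.adjMatrix_apply]
    by_cases h : Δ.G.Adj x z
    · rw [if_pos h, if_pos (dist_one_of_adj Δ h)]
    · rw [if_neg h, if_neg (fun hh => h (adj_of_dist_one Δ hh))]
  by_cases hxy : x = y
  · subst hxy
    rw [hL2, if_pos rfl]
    have : ∀ z ∈ Δ.G.neighborFinset x,
        (fun d => if d = 1 then (1 : ℝ) else 0) (Δ.G.dist x z) = 1 := by
      intro z hz
      simp only
      rw [dist_one_of_adj Δ ((SimpleGraph.mem_neighborFinset _ _ _).mp hz), if_pos rfl]
    rw [Finset.sum_congr rfl this, Finset.sum_const, degree_eq, nsmul_eq_mul, mul_one]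
  · by_cases hadj : Δ.G.Adj x y
    · rw [hL2, if_neg hxy, if_pos hadj,
        sum_nbr Δ (fun d => if d = 1 then (1 : ℝ) else 0) (le_refl 1) (by omega)
          (dist_one_of_adj Δ hadj)]
      norm_num
    · rw [hL2, if_neg hxy, if_neg hadj,
        sum_nbr Δ (fun d => if d = 1 then (1 : ℝ) else 0) (by omega : 1 ≤ 2) (by omega)
          (dist_two Δ hD2 hxy hadj)]
      norm_num

/-- An eigenvector of a generalized-quadrangle-parameter DRG for the eigenvalue `-(t+1)`,
orthogonal to the all-ones vector. -/
lemma gq_eigenvector (hD2 : Δ.D = 2) (s t : ℕ) (hs : 1 ≤ s)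
    (hb0 : Δ.b 0 = (t + 1) * s) (hb1 : Δ.b 1 = t * s)
    (hc1 : Δ.c 1 = 1) (hc2 : Δ.c 2 = t + 1) :
    ∃ w : Δ.V → ℝ, w ≠ 0 ∧ (∑ x, w x = 0) ∧
      Δ.A.mulVec w = (-( (t : ℝ) + 1)) • w := by
  classical
  -- an adjacent pair
  obtain ⟨x1, y1, hxy1⟩ := Δ.diam_eq
  obtain ⟨z1, hz1⟩ := exists_dist_eq Δ Δ.D x1 y1 hxy1 1 (by omega)
  have hadj : Δ.G.Adj x1 z1 := adj_of_dist_one Δ hz1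
  set v : Δ.V → ℝ := fun u => (if u = x1 then (1 : ℝ) else 0) - (if u = z1 then 1 else 0)
    with hv
  have hne : x1 ≠ z1 := Δ.G.ne_of_adj hadj
  have hsumv : ∑ u, v u = 0 := by
    simp [hv, Finset.sum_sub_distrib]
  set w : Δ.V → ℝ := Δ.A.mulVec v - ((s : ℝ) - 1) • v with hw
  -- J *ᵥ v = 0
  set Jm : Matrix Δ.V Δ.V ℝ := Matrix.of (fun _ _ => (1 : ℝ)) with hJ
  have hJv : Jm.mulVec v = 0 := by
    funext u
    simp only [Matrix.mulVec, dotProduct, hJ, Matrix.of_apply, one_mul]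
    simpa using hsumv
  -- the quadratic matrix identity
  have hA2 : Δ.A * Δ.A
      = (((t : ℝ) + 1) * s) • (1 : Matrix Δ.V Δ.V ℝ) + ((s : ℝ) - 1) • Δ.A
        + ((t : ℝ) + 1) • (Jm - 1 - Δ.A) := by
    ext x y
    rw [A_sq_apply Δ hD2]
    simp only [Matrix.add_apply, Matrix.smul_apply, Matrix.sub_apply, Matrix.one_apply,
      hJ, Matrix.of_apply, smul_eq_mul, DRG.A, SimpleGraph.adjMatrix_apply]
    have hk : (Δ.k : ℝ) = ((t : ℝ) + 1) * s := by
      rw [DRG.k, hb0]; push_cast; ring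
    by_cases hxy : x = y
    · subst hxy
      rw [if_pos rfl, if_pos rfl, if_neg (Δ.G.irrefl), hk]
      ring
    · by_cases hadj' : Δ.G.Adj x y
      · rw [if_neg hxy, if_pos hadj', if_pos hadj', if_neg hxy, hk, hc1, hb1]
        push_cast
        ring
      · rw [if_neg hxy, if_neg hadj', if_neg hadj', if_neg hxy, hc2]
        push_cast
        ring
  refine ⟨w, ?_, ?_, ?_⟩
  · -- w ≠ 0 : evaluate at x1
    intro h0
    have hx1 : w x1 = 0 := by rw [h0]; rfl
    have hvx1 : v x1 = 1 := by simp [hv, hne]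
    have hAv : (Δ.A.mulVec v) x1 = -1 := by
      rw [DRG.A, SimpleGraph.adjMatrix_mulVec_apply]
      have : ∀ z ∈ Δ.G.neighborFinset x1, v z = (if z = x1 then (1:ℝ) else 0) - (if z = z1 then 1 else 0) := fun z _ => rfl
      rw [Finset.sum_congr rfl this, Finset.sum_sub_distrib]
      rw [Finset.sum_ite_eq' (Δ.G.neighborFinset x1) x1 (fun _ => (1:ℝ)),
        Finset.sum_ite_eq' (Δ.G.neighborFinset x1) z1 (fun _ => (1:ℝ))]
      rw [if_neg (by simp : x1 ∉ Δ.G.neighborFinset x1),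
        if_pos ((SimpleGraph.mem_neighborFinset _ _ _).mpr hadj)]
      norm_num
    rw [hw] at hx1
    simp only [Pi.sub_apply, Pi.smul_apply, smul_eq_mul] at hx1
    rw [hAv, hvx1] at hx1
    have h1' : (1 : ℝ) ≤ (s : ℝ) := by exact_mod_cast hs
    linarith
  · -- sum w = 0
    rw [hw]
    have hAsum : ∑ u, (Δ.A.mulVec v) u = 0 := by
      have : ∀ u, (Δ.A.mulVec v) u = ∑ z, (Δ.A u z) * v z := fun u => rfl
      rw [Finset.sum_congr rfl fun u _ => this u, Finset.sum_comm]
      have hcol : ∀ z, ∑ u, Δ.A u z * v z = (Δ.k : ℝ) * v z := by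
        intro z
        rw [← Finset.sum_mul]
        congr 1
        have : ∀ u, Δ.A u z = if z ∈ Δ.G.neighborFinset u then (1:ℝ) else 0 := by
          intro u
          simp [DRG.A, SimpleGraph.adjMatrix_apply]
        rw [Finset.sum_congr rfl fun u _ => this u]
        have : ∀ u, (if z ∈ Δ.G.neighborFinset u then (1:ℝ) else 0)
            = (if u ∈ Δ.G.neighborFinset z then (1:ℝ) else 0) := by
          intro u
          simp only [SimpleGraph.mem_neighborFinset]
          exact if_congr (Δ.G.adj_comm u z) rfl rfl
        rw [Finset.sum_congr rfl fun u _ => this u, Finset.sum_boole]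
        simp only [Finset.filter_mem_eq_inter, Finset.univ_inter]
        rw [degree_eq]
      rw [Finset.sum_congr rfl fun z _ => hcol z, ← Finset.mul_sum, hsumv, mul_zero]
    simp only [Pi.sub_apply, Pi.smul_apply, smul_eq_mul, Finset.sum_sub_distrib]
    rw [hAsum, ← Finset.mul_sum, hsumv]
    ring
  · -- eigenvector equation
    have h1 : Δ.A.mulVec w
        = (Δ.A * Δ.A).mulVec v - ((s : ℝ) - 1) • (Δ.A.mulVec v) := by
      rw [hw, Matrix.mulVec_sub, Matrix.mulVec_smul, Matrix.mulVec_mulVec]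
    rw [h1, hA2]
    rw [Matrix.add_mulVec, Matrix.add_mulVec, Matrix.smul_mulVec,
      Matrix.smul_mulVec, Matrix.smul_mulVec, Matrix.sub_mulVec,
      Matrix.sub_mulVec, Matrix.one_mulVec, hJv, hw]
    module

end DRGaux
namespace DRGaux

lemma sum_reindex {W V' : Type} [Fintype W] [Fintype V'] [DecidableEq V']
    (φ : W → V') (w : W → ℝ) (g : V' → ℝ) :
    ∑ u, (∑ x, if φ x = u then w x else 0) * g u = ∑ x, w x * g (φ x) := by
  calc ∑ u, (∑ x, if φ x = u then w x else 0) * g u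
      = ∑ u, ∑ x, (if φ x = u then w x * g u else 0) := by
        refine Finset.sum_congr rfl fun u _ => ?_
        rw [Finset.sum_mul]
        refine Finset.sum_congr rfl fun x _ => ?_
        by_cases h : φ x = u
        · rw [if_pos h, if_pos h]
        · rw [if_neg h, if_neg h, zero_mul]
    _ = ∑ x, ∑ u, (if φ x = u then w x * g u else 0) := Finset.sum_comm
    _ = ∑ x, w x * g (φ x) := by
        refine Finset.sum_congr rfl fun x _ => ?_
        rw [Finset.sum_ite_eq, if_pos (Finset.mem_univ _)]

end DRGaux
open DRGaux in
/-- Lemma 3.2: upper bound for `θ₁` in the presence of an induced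
generalized quadrangle `GQ(s, c₂ - 1)`. -/
theorem stmt1 (Γ : DRG) (S : SpecData Γ) (hk : 3 ≤ Γ.k) (hD : 2 ≤ Γ.D)
    (hc2 : Γ.c 2 ≠ 1) (s : ℕ) (hs : 1 ≤ s)
    (hGQ : ContainsInducedGQ Γ s (Γ.c 2 - 1)) :
    S.θ 1 ≤ ((Γ.k : ℝ) - ((Γ.a 1 : ℝ) + 1)) / ((Γ.c 2 : ℝ) - 1) - 1 := by
  classical
  -- basic structural facts about Γ
  obtain ⟨xD, yD, hxyD⟩ := Γ.diam_eq
  obtain ⟨x2, hx2⟩ := exists_dist_eq Γ Γ.D xD yD hxyD 2 hD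
  obtain ⟨x1m, hx1adj, hx1d⟩ := exists_adj_dist Γ (show Γ.G.dist xD x2 = 1 + 1 from hx2)
  have hc2ge1 : 1 ≤ Γ.c 2 := by
    have h := Γ.c_eq 2 (by omega) hD xD x2 hx2
    rw [← h]
    refine Finset.card_pos.mpr ⟨x1m, ?_⟩
    rw [Finset.mem_filter, SimpleGraph.mem_neighborFinset]
    exact ⟨hx1adj.symm, hx1d⟩
  have hc2ge2 : 2 ≤ Γ.c 2 := by omega
  have hb1ge1 : 1 ≤ Γ.b 1 := by
    have h := Γ.b_eq 1 (by omega) xD x1m hx1d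
    rw [← h]
    refine Finset.card_pos.mpr ⟨x2, ?_⟩
    rw [Finset.mem_filter, SimpleGraph.mem_neighborFinset]
    exact ⟨hx1adj, hx2⟩
  have hc1 : Γ.c 1 = 1 := c_one Γ (by omega)
  have hcb1 : Γ.c 1 + Γ.b 1 ≤ Γ.k := cb_le_k Γ le_rfl (by omega) hx1d
  -- the representation of E 1 as a combination of distance matrices
  obtain ⟨α, hα⟩ := inSpan_E1 S (by omega)
  have hEntry : ∀ x y : Γ.V, S.E 1 x y = α (Γ.G.dist x y) := span_entry Γ α (S.E 1) hα
  set θ : ℝ := S.θ 1 with hθdef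
  -- relation R0 : k α₁ = θ α₀
  have hR0 : (Γ.k : ℝ) * α 1 = θ * α 0 := by
    have h := congrFun (congrFun (S.E_eig 1) xD) xD
    have hL : (Γ.A * S.E 1) xD xD = ∑ z ∈ Γ.G.neighborFinset xD, S.E 1 z xD := by
      rw [DRG.A, SimpleGraph.adjMatrix_mul_apply]
    have hL2 : ∑ z ∈ Γ.G.neighborFinset xD, S.E 1 z xD = (Γ.k : ℝ) * α 1 := by
      have hz : ∀ z ∈ Γ.G.neighborFinset xD, S.E 1 z xD = α 1 := by
        intro z hz
        rw [hEntry, SimpleGraph.dist_comm,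
          dist_one_of_adj Γ ((SimpleGraph.mem_neighborFinset _ _ _).mp hz)]
      rw [Finset.sum_congr rfl hz, Finset.sum_const, degree_eq, nsmul_eq_mul]
    have hR : (θ • S.E 1) xD xD = θ * α 0 := by
      rw [Matrix.smul_apply, smul_eq_mul, hEntry, SimpleGraph.dist_self]
    rw [hL, hL2, hR] at h
    exact h
  -- relation R1 : α₀ + (k - c₁ - b₁) α₁ + b₁ α₂ = θ α₁
  have hR1 : α 0 + ((Γ.k : ℝ) - 1 - Γ.b 1) * α 1 + (Γ.b 1 : ℝ) * α 2 = θ * α 1 := by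
    have h := congrFun (congrFun (S.E_eig 1) x1m) xD
    have hL : (Γ.A * S.E 1) x1m xD = ∑ z ∈ Γ.G.neighborFinset x1m, S.E 1 z xD := by
      rw [DRG.A, SimpleGraph.adjMatrix_mul_apply]
    have hL2 : ∑ z ∈ Γ.G.neighborFinset x1m, S.E 1 z xD
        = ∑ z ∈ Γ.G.neighborFinset x1m, α (Γ.G.dist xD z) := by
      refine Finset.sum_congr rfl fun z _ => ?_
      rw [hEntry, SimpleGraph.dist_comm]
    have hL3 : ∑ z ∈ Γ.G.neighborFinset x1m, α (Γ.G.dist xD z)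
        = (Γ.c 1 : ℝ) * α 0 + ((Γ.k : ℝ) - Γ.c 1 - Γ.b 1) * α 1 + (Γ.b 1 : ℝ) * α 2 :=
      sum_nbr Γ α le_rfl (by omega) hx1d
    have hR : (θ • S.E 1) x1m xD = θ * α 1 := by
      rw [Matrix.smul_apply, smul_eq_mul, hEntry, SimpleGraph.dist_comm, hx1d]
    rw [hL, hL2, hL3, hR] at h
    have hc1R : (Γ.c 1 : ℝ) = 1 := by rw [hc1]; norm_num
    rw [hc1R] at h
    linarith [h]
  -- positivity of α 0
  obtain ⟨x3, hx3⟩ := E_diag_pos S 1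
  have hα0 : 0 < α 0 := by
    have h := hEntry x3 x3
    rw [SimpleGraph.dist_self] at h
    rw [h] at hx3
    exact hx3
  have hθk : θ < (Γ.k : ℝ) := theta_lt_k S (by omega)
  -- the generalized quadrangle
  obtain ⟨Δ, ⟨hD2, _hK112, hb0, hb1', hc1', hc2'⟩, ⟨f⟩⟩ := hGQ
  have htc : Γ.c 2 = (Γ.c 2 - 1) + 1 := by omega
  obtain ⟨w, hw0, hwsum, hweig⟩ := gq_eigenvector Δ hD2 s (Γ.c 2 - 1) hs hb0 hb1' hc1' hc2'
  set t : ℕ := Γ.c 2 - 1 with htdef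
  set lam : ℝ := -((t : ℝ) + 1) with hlam
  -- the entries of E 1 on the image of the GQ
  have hfE : ∀ x y : Δ.V, S.E 1 (f x) (f y)
      = (α 0 - α 2) * (if x = y then (1 : ℝ) else 0)
        + (α 1 - α 2) * (if Δ.G.Adj x y then (1 : ℝ) else 0) + α 2 := by
    intro x y
    by_cases hxy : x = y
    · subst hxy
      rw [hEntry, SimpleGraph.dist_self, if_pos rfl, if_neg (Δ.G.irrefl)]
      ring
    · by_cases hadj : Δ.G.Adj x y
      · rw [hEntry, dist_one_of_adj Γ (f.map_adj_iff.mpr hadj), if_neg hxy, if_pos hadj]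
        ring
      · have hfne : (f x : Γ.V) ≠ f y := fun h => hxy (f.injective h)
        have hnadj : ¬ Γ.G.Adj (f x) (f y) := fun h => hadj (f.map_adj_iff.mp h)
        have hd2 : Δ.G.dist x y = 2 := dist_two Δ hD2 hxy hadj
        obtain ⟨z, hz1, hz2⟩ := exists_adj_dist Δ (show Δ.G.dist x y = 1 + 1 from hd2)
        have ha1 : Γ.G.Adj (f x) (f z) := f.map_adj_iff.mpr (adj_of_dist_one Δ hz2)
        have ha2 : Γ.G.Adj (f z) (f y) := f.map_adj_iff.mpr hz1
        have hdle : Γ.G.dist (f x) (f y) ≤ 2 := by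
          calc Γ.G.dist (f x) (f y)
              ≤ Γ.G.dist (f x) (f z) + Γ.G.dist (f z) (f y) := Γ.conn.dist_triangle
            _ = 2 := by rw [dist_one_of_adj Γ ha1, dist_one_of_adj Γ ha2]
        have hdeq : Γ.G.dist (f x) (f y) = 2 := by
          have h0 : Γ.G.dist (f x) (f y) ≠ 0 := fun h => hfne ((dist_zero_iff Γ _ _).mp h)
          have h1 : Γ.G.dist (f x) (f y) ≠ 1 := fun h => hnadj (adj_of_dist_one Γ h)
          omega
        rw [hEntry, hdeq, if_neg hxy, if_neg hadj]
        ring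
  -- the quadratic form at the zero-extension of w
  set χ : Γ.V → ℝ := fun u => ∑ x : Δ.V, if f x = u then w x else 0 with hχ
  have hQ0 : 0 ≤ χ ⬝ᵥ ((S.E 1).mulVec χ) := E_quadform_nonneg S 1 χ
  have hstep1 : χ ⬝ᵥ ((S.E 1).mulVec χ)
      = ∑ x : Δ.V, w x * ((S.E 1).mulVec χ) (f x) :=
    sum_reindex (fun x => f x) w (fun u => ((S.E 1).mulVec χ) u)
  have hstep2 : ∀ x : Δ.V, ((S.E 1).mulVec χ) (f x) = ∑ y : Δ.V, w y * S.E 1 (f x) (f y) := by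
    intro x
    have h1 : ((S.E 1).mulVec χ) (f x) = ∑ v, S.E 1 (f x) v * χ v := rfl
    have h2 : ∑ v, S.E 1 (f x) v * χ v = ∑ v, χ v * S.E 1 (f x) v := by
      refine Finset.sum_congr rfl fun v _ => mul_comm _ _
    rw [h1, h2, hχ]
    exact sum_reindex (fun x => f x) w (fun v => S.E 1 (f x) v)
  -- evaluate the inner sums
  have hinner : ∀ x : Δ.V, ∑ y : Δ.V, w y * S.E 1 (f x) (f y)
      = ((α 0 - α 2) + (α 1 - α 2) * lam) * w x := by
    intro x
    have e1 : ∑ y : Δ.V, w y * (if x = y then (1 : ℝ) else 0) = w x := by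
      have : ∀ y : Δ.V, w y * (if x = y then (1 : ℝ) else 0)
          = (if x = y then w y else 0) := by
        intro y
        by_cases h : x = y
        · rw [if_pos h, if_pos h, mul_one]
        · rw [if_neg h, if_neg h, mul_zero]
      rw [Finset.sum_congr rfl fun y _ => this y, Finset.sum_ite_eq,
        if_pos (Finset.mem_univ _)]
    have e2 : ∑ y : Δ.V, w y * (if Δ.G.Adj x y then (1 : ℝ) else 0) = lam * w x := by
      have h1 : ∀ y : Δ.V, w y * (if Δ.G.Adj x y then (1 : ℝ) else 0) = Δ.A x y * w y := by
        intro y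
        rw [DRG.A, SimpleGraph.adjMatrix_apply]
        ring
      rw [Finset.sum_congr rfl fun y _ => h1 y]
      have h2 : ∑ y, Δ.A x y * w y = (Δ.A.mulVec w) x := rfl
      rw [h2, hweig]
      simp only [Pi.smul_apply, smul_eq_mul]
    calc ∑ y : Δ.V, w y * S.E 1 (f x) (f y)
        = ∑ y : Δ.V, ((α 0 - α 2) * (w y * (if x = y then (1 : ℝ) else 0))
            + (α 1 - α 2) * (w y * (if Δ.G.Adj x y then (1 : ℝ) else 0)) + α 2 * w y) := by
          refine Finset.sum_congr rfl fun y _ => ?_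
          rw [hfE x y]; ring
      _ = (α 0 - α 2) * (∑ y : Δ.V, w y * (if x = y then (1 : ℝ) else 0))
            + (α 1 - α 2) * (∑ y : Δ.V, w y * (if Δ.G.Adj x y then (1 : ℝ) else 0))
            + α 2 * (∑ y : Δ.V, w y) := by
          rw [Finset.sum_add_distrib, Finset.sum_add_distrib, Finset.mul_sum,
            Finset.mul_sum, Finset.mul_sum]
      _ = ((α 0 - α 2) + (α 1 - α 2) * lam) * w x := by
          rw [e1, e2, hwsum]; ring
  have hQval : χ ⬝ᵥ ((S.E 1).mulVec χ)
      = ((α 0 - α 2) + (α 1 - α 2) * lam) * ∑ x : Δ.V, (w x) ^ 2 := by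
    rw [hstep1, Finset.sum_congr rfl fun x _ => by rw [hstep2 x, hinner x], Finset.mul_sum]
    refine Finset.sum_congr rfl fun x _ => by ring
  have hwpos : 0 < ∑ x : Δ.V, (w x) ^ 2 := by
    rcases Function.ne_iff.mp hw0 with ⟨x, hx⟩
    exact Finset.sum_pos' (fun y _ => sq_nonneg _)
      ⟨x, Finset.mem_univ x, lt_of_le_of_ne (sq_nonneg _) (Ne.symm (pow_ne_zero 2 hx))⟩
  have hCoef : 0 ≤ (α 0 - α 2) + (α 1 - α 2) * lam := by
    rw [hQval] at hQ0
    by_contra hneg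
    push_neg at hneg
    nlinarith [mul_pos (neg_pos.mpr hneg) hwpos]
  -- final algebra
  have htR : (t : ℝ) = (Γ.c 2 : ℝ) - 1 := by
    have : ((Γ.c 2 : ℕ) : ℝ) = ((t + 1 : ℕ) : ℝ) := by exact_mod_cast congrArg Nat.cast htc
    push_cast at this
    linarith
  have hkey : ((Γ.k : ℝ) - θ) * ((Γ.b 1 : ℝ) - (t : ℝ) * (θ + 1)) * α 0
      = (Γ.k : ℝ) * (Γ.b 1 : ℝ) * ((α 0 - α 2) + (α 1 - α 2) * lam) := by
    rw [hlam]
    linear_combination ((Γ.b 1 : ℝ) + (t : ℝ) * (Γ.k : ℝ) - (t : ℝ) - (t : ℝ) * θ) * hR0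
      + (-((Γ.k : ℝ) * (t : ℝ))) * hR1
  have hfac : 0 ≤ ((Γ.k : ℝ) - θ) * ((Γ.b 1 : ℝ) - (t : ℝ) * (θ + 1)) * α 0 := by
    rw [hkey]
    have hkb : (0 : ℝ) ≤ (Γ.k : ℝ) * (Γ.b 1 : ℝ) := by positivity
    exact mul_nonneg hkb hCoef
  have hmain : (t : ℝ) * (θ + 1) ≤ (Γ.b 1 : ℝ) := by
    nlinarith [mul_pos (sub_pos.mpr hθk) hα0, hfac]
  -- conclude
  have ha1 : (Γ.a 1 : ℝ) = (Γ.k : ℝ) - (Γ.b 1 : ℝ) - 1 := by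
    rw [DRG.a, hc1]
    rw [Nat.cast_sub (by omega : 1 ≤ Γ.k - Γ.b 1), Nat.cast_sub (by omega : Γ.b 1 ≤ Γ.k)]
    norm_num
  rw [ha1, show (Γ.k : ℝ) - ((Γ.k : ℝ) - (Γ.b 1 : ℝ) - 1 + 1) = (Γ.b 1 : ℝ) from by ring,
    ← htR]
  have htpos : (0 : ℝ) < (t : ℝ) := by
    rw [htR]
    have : (2 : ℝ) ≤ (Γ.c 2 : ℝ) := by exact_mod_cast hc2ge2
    linarith
  have hdiv : θ + 1 ≤ (Γ.b 1 : ℝ) / (t : ℝ) :=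
    (le_div_iff₀ htpos).mpr (le_of_eq_of_le (by ring) hmain)
  linarith
end

section
/- Let Γ be a distance-regular graph with valency k and smallest eigenvalue θ_min, and let C be a clique in Γ with c vertices. Then c ≤ 1 − k/θ_min. -/
open Finset Matrix

section Delsarte

open Polynomial in
/-- A matrix whose entries depend only on graph distance. -/
def DistInv (Γ : DRG) (M : Matrix Γ.V Γ.V ℝ) : Prop :=
  ∀ x y x' y' : Γ.V, Γ.G.dist x y = Γ.G.dist x' y' → M x y = M x' y'

variable (Γ : DRG)

lemma drg_deg (x : Γ.V) : (Γ.G.neighborFinset x).card = Γ.k := by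
  have h := Γ.b_eq 0 (Nat.zero_le _) x x (SimpleGraph.dist_self)
  rw [show ((Γ.G.neighborFinset x).filter fun z => Γ.G.dist x z = 0 + 1)
      = Γ.G.neighborFinset x from ?_] at h
  · exact h
  · apply Finset.filter_true_of_mem
    intro z hz
    rw [SimpleGraph.mem_neighborFinset] at hz
    simpa using SimpleGraph.dist_eq_one_iff_adj.mpr hz

lemma dist_nbr_bounds {x y z : Γ.V} (hz : z ∈ Γ.G.neighborFinset x) :
    Γ.G.dist z y ≤ Γ.G.dist x y + 1 ∧ Γ.G.dist x y ≤ Γ.G.dist z y + 1 := by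
  rw [SimpleGraph.mem_neighborFinset] at hz
  have h1 : Γ.G.dist z x = 1 := SimpleGraph.dist_eq_one_iff_adj.mpr hz.symm
  have h2 : Γ.G.dist x z = 1 := SimpleGraph.dist_eq_one_iff_adj.mpr hz
  constructor
  · have := Γ.conn.dist_triangle (u := z) (v := x) (w := y); omega
  · have := Γ.conn.dist_triangle (u := x) (v := z) (w := y); omega

lemma card_filter_dist (j : ℕ) (x y x' y' : Γ.V) (h : Γ.G.dist x y = Γ.G.dist x' y') :
    ((Γ.G.neighborFinset x).filter fun z => Γ.G.dist z y = j).card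
      = ((Γ.G.neighborFinset x').filter fun z => Γ.G.dist z y' = j).card := by
  set i := Γ.G.dist x y with hi
  have key : ∀ a b : Γ.V, Γ.G.dist a b = i →
      ((Γ.G.neighborFinset a).filter fun z => Γ.G.dist z b = j).card =
      (if j = i + 1 then Γ.b i
       else if j + 1 = i then Γ.c i
       else if j = i ∧ 1 ≤ i then Γ.k - Γ.c i - Γ.b i
       else if j = 1 ∧ i = 0 then Γ.k
       else 0) := by
    intro a b hab
    have hiD : i ≤ Γ.D := hab ▸ Γ.diam_le a b
    have hba : Γ.G.dist b a = i := by rw [SimpleGraph.dist_comm]; exact hab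
    have hfP : ∀ m : ℕ, ((Γ.G.neighborFinset a).filter fun z => Γ.G.dist z b = m)
        = ((Γ.G.neighborFinset a).filter fun z => Γ.G.dist b z = m) := by
      intro m
      apply Finset.filter_congr
      intro z _
      rw [SimpleGraph.dist_comm]
    have hcb : 1 ≤ i → ((Γ.G.neighborFinset a).filter fun z => Γ.G.dist z b = i - 1).card = Γ.c i := by
      intro h1
      rw [hfP]
      exact Γ.c_eq i h1 hiD b a hba
    have hbb : ((Γ.G.neighborFinset a).filter fun z => Γ.G.dist z b = i + 1).card = Γ.b i := by
      rw [hfP]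
      exact Γ.b_eq i hiD b a hba
    split_ifs with h1 h2 h3 h4
    · subst h1; exact hbb
    · have : i - 1 = j := by omega
      rw [← this]; exact hcb (by omega)
    · -- j = i, 1 ≤ i : middle class
      obtain ⟨hj, h1i⟩ := h3
      subst hj
      have hmem : ∀ z ∈ Γ.G.neighborFinset a,
          Γ.G.dist z b = i - 1 ∨ Γ.G.dist z b = i ∨ Γ.G.dist z b = i + 1 := by
        intro z hz
        have := dist_nbr_bounds Γ (y := b) hz
        rw [hab] at this
        omega
      have hsplit : ((Γ.G.neighborFinset a).filter fun z =>
          Γ.G.dist z b = i - 1 ∨ (Γ.G.dist z b = i ∨ Γ.G.dist z b = i + 1))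
          = Γ.G.neighborFinset a := Finset.filter_true_of_mem hmem
      rw [Finset.filter_or, Finset.filter_or] at hsplit
      have hd1 : Disjoint ((Γ.G.neighborFinset a).filter fun z => Γ.G.dist z b = i - 1)
          (((Γ.G.neighborFinset a).filter fun z => Γ.G.dist z b = i) ∪
           ((Γ.G.neighborFinset a).filter fun z => Γ.G.dist z b = i + 1)) := by
        rw [Finset.disjoint_left]
        intro z hz hz'
        rw [Finset.mem_filter] at hz
        rw [Finset.mem_union, Finset.mem_filter, Finset.mem_filter] at hz'
        omega
      have hd2 : Disjoint ((Γ.G.neighborFinset a).filter fun z => Γ.G.dist z b = i)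
          ((Γ.G.neighborFinset a).filter fun z => Γ.G.dist z b = i + 1) := by
        rw [Finset.disjoint_left]
        intro z hz hz'
        rw [Finset.mem_filter] at hz
        rw [Finset.mem_filter] at hz'
        omega
      have hcard := congrArg Finset.card hsplit
      rw [Finset.card_union_of_disjoint hd1, Finset.card_union_of_disjoint hd2,
          drg_deg, hcb h1i, hbb] at hcard
      omega
    · -- j = 1, i = 0
      obtain ⟨hj, hi0⟩ := h4
      subst hj
      have hfull : ((Γ.G.neighborFinset a).filter fun z => Γ.G.dist z b = 1)
          = Γ.G.neighborFinset a := by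
        apply Finset.filter_true_of_mem
        intro z hz
        have hba' : a = b := (Γ.conn.dist_eq_zero_iff).mp (by rw [hab, hi0])
        rw [SimpleGraph.mem_neighborFinset] at hz
        rw [← hba']
        exact SimpleGraph.dist_eq_one_iff_adj.mpr hz.symm
      rw [hfull, drg_deg]
    · -- empty
      rw [Finset.card_eq_zero, Finset.filter_eq_empty_iff]
      intro z hz hdz
      have hb := dist_nbr_bounds Γ (y := b) hz
      rw [hab] at hb
      have hij : i = 0 ∧ j = 0 := by
        rcases h3' : Classical.em (j = i) with _ | _ <;> omega
      obtain ⟨hi0, hj0⟩ := hij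
      have hba' : a = b := (Γ.conn.dist_eq_zero_iff).mp (by rw [hab, hi0])
      have hzb : z = b := (Γ.conn.dist_eq_zero_iff).mp (by rw [hdz, hj0])
      rw [SimpleGraph.mem_neighborFinset] at hz
      rw [hzb, ← hba'] at hz
      exact Γ.G.irrefl hz
  rw [key x y hi.symm, key x' y' (by rw [← h, hi])]

lemma sum_transfer (M : Matrix Γ.V Γ.V ℝ) (hM : DistInv Γ M) (j : ℕ) (y y' : Γ.V)
    (s t : Finset Γ.V) (hcard : s.card = t.card)
    (hs : ∀ z ∈ s, Γ.G.dist z y = j) (ht : ∀ z ∈ t, Γ.G.dist z y' = j) :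
    ∑ z ∈ s, M z y = ∑ z ∈ t, M z y' := by
  rcases Finset.eq_empty_or_nonempty s with rfl | ⟨z₀, hz₀⟩
  · have : t = ∅ := Finset.card_eq_zero.mp (by simp [← hcard])
    simp [this]
  · have h1 : ∑ z ∈ s, M z y = s.card • M z₀ y := by
      rw [← Finset.sum_const]
      exact Finset.sum_congr rfl fun z hz => hM _ _ _ _ (by rw [hs z hz, hs z₀ hz₀])
    have h2 : ∑ z ∈ t, M z y' = t.card • M z₀ y := by
      rw [← Finset.sum_const]
      exact Finset.sum_congr rfl fun z hz => hM _ _ _ _ (by rw [ht z hz, hs z₀ hz₀])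
    rw [h1, h2, hcard]

lemma distInv_mulA (M : Matrix Γ.V Γ.V ℝ) (hM : DistInv Γ M) : DistInv Γ (Γ.A * M) := by
  intro x y x' y' h
  show (Γ.G.adjMatrix ℝ * M) x y = (Γ.G.adjMatrix ℝ * M) x' y'
  rw [SimpleGraph.adjMatrix_mul_apply, SimpleGraph.adjMatrix_mul_apply]
  have hx : ∀ z ∈ Γ.G.neighborFinset x, Γ.G.dist z y ∈ Finset.range (Γ.D + 2) :=
    fun z _ => Finset.mem_range.mpr (by have := Γ.diam_le z y; omega)
  have hx' : ∀ z ∈ Γ.G.neighborFinset x', Γ.G.dist z y' ∈ Finset.range (Γ.D + 2) :=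
    fun z _ => Finset.mem_range.mpr (by have := Γ.diam_le z y'; omega)
  rw [← Finset.sum_fiberwise_of_maps_to hx (fun z => M z y),
      ← Finset.sum_fiberwise_of_maps_to hx' (fun z => M z y')]
  refine Finset.sum_congr rfl fun j _ => ?_
  exact sum_transfer Γ M hM j y y' _ _ (card_filter_dist Γ j x y x' y' h)
    (fun z hz => (Finset.mem_filter.mp hz).2) (fun z hz => (Finset.mem_filter.mp hz).2)

lemma distInv_one : DistInv Γ (1 : Matrix Γ.V Γ.V ℝ) := by
  intro x y x' y' h
  by_cases hxy : x = y
  · have h0 : Γ.G.dist x' y' = 0 := by rw [← h, hxy, SimpleGraph.dist_self]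
    have : x' = y' := (Γ.conn.dist_eq_zero_iff).mp h0
    rw [hxy, this, Matrix.one_apply_eq, Matrix.one_apply_eq]
  · have h0 : Γ.G.dist x y ≠ 0 := fun h0 => hxy ((Γ.conn.dist_eq_zero_iff).mp h0)
    have hxy' : x' ≠ y' := fun he => h0 (by rw [h, he, SimpleGraph.dist_self])
    rw [Matrix.one_apply_ne hxy, Matrix.one_apply_ne hxy']

lemma distInv_smul (r : ℝ) (M : Matrix Γ.V Γ.V ℝ) (hM : DistInv Γ M) :
    DistInv Γ (r • M) := fun x y x' y' h => by
  simp only [Matrix.smul_apply, smul_eq_mul]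
  rw [hM x y x' y' h]

lemma distInv_sum {ι : Type*} (s : Finset ι) (f : ι → Matrix Γ.V Γ.V ℝ)
    (hf : ∀ i ∈ s, DistInv Γ (f i)) : DistInv Γ (∑ i ∈ s, f i) := by
  intro x y x' y' h
  rw [Matrix.sum_apply, Matrix.sum_apply]
  exact Finset.sum_congr rfl fun i hi => hf i hi x y x' y' h

lemma distInv_pow (n : ℕ) : DistInv Γ (Γ.A ^ n) := by
  induction n with
  | zero => rw [pow_zero]; exact distInv_one Γ
  | succ n ih => rw [pow_succ']; exact distInv_mulA Γ _ ih

open Polynomial in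
lemma distInv_aeval (p : ℝ[X]) : DistInv Γ (aeval Γ.A p) := by
  rw [Polynomial.aeval_eq_sum_range]
  exact distInv_sum Γ _ _ fun i _ => distInv_smul Γ _ _ (distInv_pow Γ i)

variable (S : SpecData Γ)

open Polynomial in
lemma aeval_prod_eq (s : Finset (Fin (Γ.D + 1))) :
    aeval Γ.A (∏ j ∈ s, (X - Polynomial.C (S.θ j)))
      = ∑ l, (∏ j ∈ s, (S.θ l - S.θ j)) • S.E l := by
  induction s using Finset.induction_on with
  | empty => simpa using S.E_sum.symm
  | @insert a s ha ih =>
    rw [Finset.prod_insert ha, _root_.map_mul, ih, map_sub, aeval_X, aeval_C,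
        Algebra.algebraMap_eq_smul_one, Finset.mul_sum]
    refine Finset.sum_congr rfl fun l _ => ?_
    rw [Finset.prod_insert ha, sub_mul, smul_mul_assoc, one_mul, mul_smul_comm,
        S.E_eig l, smul_smul, smul_smul, ← sub_smul]
    congr 1
    ring

lemma E_last_distInv : DistInv Γ (S.E (Fin.last Γ.D)) := by
  classical
  set κ := ∏ j ∈ Finset.univ.erase (Fin.last Γ.D), (S.θ (Fin.last Γ.D) - S.θ j) with hκ
  have hκ0 : κ ≠ 0 := by
    rw [hκ]
    apply Finset.prod_ne_zero_iff.mpr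
    intro j hj
    have : j ≠ Fin.last Γ.D := Finset.ne_of_mem_erase hj
    exact sub_ne_zero.mpr fun he => this (S.θ_anti.injective he).symm
  have hp := aeval_prod_eq Γ S (Finset.univ.erase (Fin.last Γ.D))
  have hsum : Polynomial.aeval Γ.A
      (∏ j ∈ Finset.univ.erase (Fin.last Γ.D), (Polynomial.X - Polynomial.C (S.θ j)))
      = κ • S.E (Fin.last Γ.D) := by
    rw [hp]
    exact Finset.sum_eq_single (Fin.last Γ.D)
      (fun l _ hl => by
        rw [Finset.prod_eq_zero (Finset.mem_erase.mpr ⟨hl, Finset.mem_univ l⟩) (sub_self (S.θ l)),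
          zero_smul])
      (fun h => absurd (Finset.mem_univ _) h)
  have hE : S.E (Fin.last Γ.D) = κ⁻¹ • Polynomial.aeval Γ.A
      (∏ j ∈ Finset.univ.erase (Fin.last Γ.D), (Polynomial.X - Polynomial.C (S.θ j))) := by
    rw [hsum, smul_smul, inv_mul_cancel₀ hκ0, one_smul]
  rw [hE]
  exact distInv_smul Γ _ _ (distInv_aeval Γ _)

end Delsarte

/-- Delsarte clique bound: any clique `C` satisfies
`|C| ≤ 1 - k/θ_min`. -/
theorem stmt3 (Γ : DRG) (S : SpecData Γ)
    (hneg : S.θ (Fin.last Γ.D) < 0)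
    (C : Finset Γ.V) (hC : Γ.G.IsClique (C : Set Γ.V)) :
    (C.card : ℝ) ≤ 1 - (Γ.k : ℝ) / S.θ (Fin.last Γ.D) := by
  classical
  set θ := S.θ (Fin.last Γ.D) with hθdef
  by_cases hsmall : C.card ≤ 1
  · have h1 : (Γ.k : ℝ) / θ ≤ 0 :=
      div_nonpos_of_nonneg_of_nonpos (Nat.cast_nonneg _) hneg.le
    have h2 : (C.card : ℝ) ≤ 1 := by exact_mod_cast hsmall
    linarith
  push_neg at hsmall
  obtain ⟨x, hx, y, hy, hxy⟩ := Finset.one_lt_card.mp hsmall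
  have hadj : Γ.G.Adj x y := hC (Finset.mem_coe.mpr hx) (Finset.mem_coe.mpr hy) hxy
  set E := S.E (Fin.last Γ.D) with hEdef
  have hInv : DistInv Γ E := E_last_distInv Γ S
  have hsymm : ∀ u v, E v u = E u v := fun u v => by
    conv_lhs => rw [show E v u = Eᵀ u v from rfl, S.E_symm (Fin.last Γ.D)]
  have hidem : E * E = E := by simpa using S.E_mul (Fin.last Γ.D) (Fin.last Γ.D)
  have hdiag : ∀ u, E u u = E x x := fun u =>
    hInv u u x x (by rw [SimpleGraph.dist_self, SimpleGraph.dist_self])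
  have hsq : ∀ u, E u u = ∑ z, (E u z) ^ 2 := by
    intro u
    conv_lhs => rw [← hidem]
    rw [Matrix.mul_apply]
    exact Finset.sum_congr rfl fun z _ => by rw [hsymm u z, sq]
  have hxx_nonneg : 0 ≤ E x x := by
    rw [hsq]; exact Finset.sum_nonneg fun z _ => sq_nonneg _
  have hxx_pos : 0 < E x x := by
    rcases hxx_nonneg.lt_or_eq with h | h
    · exact h
    exfalso
    apply S.E_ne (Fin.last Γ.D)
    ext u v
    have h0 : E u u = 0 := by rw [hdiag u, ← h]
    have hz : ∑ z, (E u z) ^ 2 = 0 := by rw [← hsq u, h0]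
    have := (Finset.sum_eq_zero_iff_of_nonneg (fun z _ => sq_nonneg _)).mp hz v
      (Finset.mem_univ v)
    have : E u v = 0 := by
      have := sq_eq_zero_iff.mp this
      exact this
    simpa using this
  have hdist1 : Γ.G.dist x y = 1 := SimpleGraph.dist_eq_one_iff_adj.mpr hadj
  have hAE : Γ.A * E = θ • E := S.E_eig (Fin.last Γ.D)
  have hk1 : (Γ.k : ℝ) * E x y = θ * E x x := by
    have h1 : (Γ.A * E) x x = θ * E x x := by rw [hAE]; simp [Matrix.smul_apply]
    have h2 : (Γ.A * E) x x = ∑ z ∈ Γ.G.neighborFinset x, E z x := by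
      show (Γ.G.adjMatrix ℝ * E) x x = _
      rw [SimpleGraph.adjMatrix_mul_apply]
    have h3 : ∀ z ∈ Γ.G.neighborFinset x, E z x = E x y := fun z hz =>
      hInv z x x y (by
        rw [SimpleGraph.dist_eq_one_iff_adj.mpr
          ((Γ.G.mem_neighborFinset _ _).mp hz).symm, hdist1])
    have h4 : ∑ z ∈ Γ.G.neighborFinset x, E z x = (Γ.k : ℝ) * E x y := by
      rw [Finset.sum_congr rfl h3, Finset.sum_const, drg_deg, nsmul_eq_mul]
    rw [← h4, ← h2, h1]
  have hkpos : 0 < Γ.k := by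
    have : y ∈ Γ.G.neighborFinset x := (Γ.G.mem_neighborFinset _ _).mpr hadj
    have := Finset.card_pos.mpr ⟨y, this⟩
    rw [drg_deg] at this
    exact this
  -- the quadratic form is nonnegative
  have hQ : 0 ≤ ∑ u ∈ C, ∑ v ∈ C, E u v := by
    set w : Γ.V → ℝ := fun z => if z ∈ C then 1 else 0 with hw
    have hmv : ∀ u, E.mulVec w u = ∑ v ∈ C, E u v := by
      intro u
      simp [Matrix.mulVec, dotProduct, hw, mul_ite, mul_one, mul_zero,
        Finset.sum_ite_mem, Finset.univ_inter]
    have h1 : ∑ u ∈ C, ∑ v ∈ C, E u v = w ⬝ᵥ E.mulVec w := by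
      simp [dotProduct, hw, hmv, ite_mul, one_mul, zero_mul,
        Finset.sum_ite_mem, Finset.univ_inter]
      simp only [← hw, hmv]
    have h2 : w ⬝ᵥ E.mulVec w = (E.mulVec w) ⬝ᵥ (E.mulVec w) := by
      conv_lhs => rw [← hidem, ← Matrix.mulVec_mulVec, Matrix.dotProduct_mulVec]
      congr 1
      rw [← Matrix.mulVec_transpose, S.E_symm (Fin.last Γ.D)]
    rw [h1, h2]
    exact Finset.sum_nonneg fun i _ => mul_self_nonneg _
  -- compute the quadratic form
  have hinner : ∀ u ∈ C, ∑ v ∈ C, E u v = E x x + ((C.card : ℝ) - 1) * E x y := by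
    intro u hu
    rw [← Finset.add_sum_erase _ _ hu]
    have hval : ∀ v ∈ C.erase u, E u v = E x y := by
      intro v hv
      obtain ⟨hvu, hvC⟩ := Finset.mem_erase.mp hv
      have hadj' : Γ.G.Adj u v := hC (Finset.mem_coe.mpr hu) (Finset.mem_coe.mpr hvC)
        (Ne.symm hvu)
      exact hInv u v x y (by rw [SimpleGraph.dist_eq_one_iff_adj.mpr hadj', hdist1])
    rw [Finset.sum_congr rfl hval, Finset.sum_const, Finset.card_erase_of_mem hu,
      nsmul_eq_mul, hdiag u]
    congr 1
    rw [Nat.cast_sub (by omega)]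
    norm_num
  have hQeq : ∑ u ∈ C, ∑ v ∈ C, E u v
      = (C.card : ℝ) * (E x x + ((C.card : ℝ) - 1) * E x y) := by
    rw [Finset.sum_congr rfl hinner, Finset.sum_const, nsmul_eq_mul]
  rw [hQeq] at hQ
  have hcpos : (0:ℝ) < (C.card : ℝ) := by
    have : 0 < C.card := by omega
    exact_mod_cast this
  have hfac : 0 ≤ E x x + ((C.card : ℝ) - 1) * E x y := by nlinarith [hQ, hcpos]
  have hknn : (0:ℝ) ≤ (Γ.k : ℝ) := Nat.cast_nonneg _
  have hprod : 0 ≤ (E x x + ((C.card : ℝ) - 1) * E x y) * (Γ.k : ℝ) :=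
    mul_nonneg hfac hknn
  have hsub : ((C.card : ℝ) - 1) * ((Γ.k : ℝ) * E x y)
      = ((C.card : ℝ) - 1) * (θ * E x x) := by rw [hk1]
  have hkey : 0 ≤ (Γ.k : ℝ) + ((C.card : ℝ) - 1) * θ := by
    nlinarith [hprod, hsub, hxx_pos]
  have hθ1 : (Γ.k : ℝ) / θ ≤ 1 - (C.card : ℝ) := by
    rw [div_le_iff_of_neg hneg]
    nlinarith [hkey]
  linarith
end

section
/- Let Γ be a geometric distance-regular graph with valency k ≥ 3 and diameter D. For any vertex x and Delsarte clique C with d(x,C) = i ≥ 1, the parameters γ_j = |Γ_j(y) ∩ C'| (well-defined for any vertex y and Delsarte clique C' at distance j) satisfy γ_i ≥ γ_{i−1}; hence the sequence γ₀ = 1, γ₁, …, γ_{D} is non-decreasing. -/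
open Finset Matrix

/-- the clique parameters `γ_i` of a geometric distance-regular
graph satisfy `γ₀ = 1` and form a non-decreasing sequence (at every index where
they are realized). -/
theorem stmt6 (Γ : DRG) (GD : GeomData Γ) (hk : 3 ≤ Γ.k) :
    GD.γ 0 = 1 ∧
    ∀ i : ℕ, 1 ≤ i → i ≤ Γ.D →
      (∃ x : Γ.V, ∃ C ∈ GD.cliques,
        (∀ y ∈ C, i ≤ Γ.G.dist x y) ∧ ∃ y ∈ C, Γ.G.dist x y = i) →
      GD.γ (i - 1) ≤ GD.γ i := by
  classical
  constructor
  · -- γ 0 = 1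
    obtain ⟨v⟩ := Γ.conn.nonempty
    have hb := Γ.b_eq 0 (Nat.zero_le _) v v (by simp)
    have hkpos : 0 < Γ.k := by omega
    rw [show Γ.k = Γ.b 0 from rfl, ← hb, Finset.card_pos] at hkpos
    obtain ⟨w, hw⟩ := hkpos
    simp only [Finset.mem_filter, SimpleGraph.mem_neighborFinset] at hw
    obtain ⟨C, ⟨hC, hvC, _⟩, _⟩ := GD.edge_unique v w hw.1
    have h := GD.γ_eq 0 v C hC (fun y _ => Nat.zero_le _)
      ⟨v, hvC, by simp⟩
    rw [← h]
    have : C.filter (fun z => Γ.G.dist v z = 0) = {v} := by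
      ext z
      simp only [Finset.mem_filter, Finset.mem_singleton]
      constructor
      · rintro ⟨_, hz⟩
        exact ((Γ.conn v z).dist_eq_zero_iff.mp hz).symm
      · rintro rfl; exact ⟨hvC, by simp⟩
    rw [this, Finset.card_singleton]
  · rintro i hi1 hiD ⟨x, C, hC, hmin, y, hyC, hxy⟩
    -- find neighbor w of x with dist w y = i - 1
    obtain ⟨p, hp⟩ := Γ.conn.exists_walk_length_eq_dist x y
    have hxny : x ≠ y := by
      intro h; subst h; rw [SimpleGraph.dist_self] at hxy; omega
    cases p with
    | nil => exact absurd rfl hxny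
    | cons hadj q =>
      rename_i w
      have hq : q.length = i - 1 := by
        simp [hxy] at hp; omega
      have hwy_le : Γ.G.dist w y ≤ i - 1 := hq ▸ SimpleGraph.dist_le q
      have hxw : Γ.G.dist x w = 1 := SimpleGraph.dist_eq_one_iff_adj.mpr hadj
      have hwy : Γ.G.dist w y = i - 1 := by
        have := Γ.conn.dist_triangle (u := x) (v := w) (w := y)
        omega
      -- w has distance ≥ i - 1 to every vertex of C
      have hwmin : ∀ z ∈ C, i - 1 ≤ Γ.G.dist w z := by
        intro z hz
        have h1 := Γ.conn.dist_triangle (u := x) (v := w) (w := z)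
        have h2 := hmin z hz
        omega
      have hγ1 := GD.γ_eq (i - 1) w C hC hwmin ⟨y, hyC, hwy⟩
      have hγ2 := GD.γ_eq i x C hC hmin ⟨y, hyC, hxy⟩
      rw [← hγ1, ← hγ2]
      apply Finset.card_le_card
      intro z hz
      simp only [Finset.mem_filter] at hz ⊢
      refine ⟨hz.1, ?_⟩
      have h1 := Γ.conn.dist_triangle (u := x) (v := w) (w := z)
      have h2 := hmin z hz.1
      omega
end

section
/- Let Γ be a geometric distance-regular graph with valency k ≥ 3 and diameter D ≥ 2. Then for 1 ≤ i ≤ D−1, the intersection numbers satisfy a_i = c_i (a₁ + 1 − γ_{i−1})/γ_{i−1} + b_i (γ_i − 1)/(a₁ + 2 − γ_i), where γ_i are the clique-distance parameters. In particular, if γ_{i−1} = γ_i = 1 then a_i = c_i a₁. -/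
open Finset Matrix

section AuxProof

open Finset SimpleGraph

namespace DRGproof

private lemma walk_split {V : Type} {G : SimpleGraph V} {x y : V} (p : G.Walk x y) :
    ∀ j ≤ p.length, ∃ z, ∃ q : G.Walk x z, ∃ r : G.Walk z y,
      q.length = j ∧ r.length = p.length - j := by
  induction p with
  | nil =>
      intro j hj
      simp only [SimpleGraph.Walk.length_nil, Nat.le_zero] at hj
      subst hj
      exact ⟨_, SimpleGraph.Walk.nil, SimpleGraph.Walk.nil, rfl, rfl⟩
  | cons h p ih =>
      intro j hj
      cases j with
      | zero => exact ⟨_, SimpleGraph.Walk.nil, SimpleGraph.Walk.cons h p, rfl, rfl⟩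
      | succ j =>
          obtain ⟨z, q, r, hq, hr⟩ := ih j (by simp only [SimpleGraph.Walk.length_cons] at hj; omega)
          refine ⟨z, SimpleGraph.Walk.cons h q, r, by simp [hq], ?_⟩
          simp only [SimpleGraph.Walk.length_cons]
          omega

variable (Γ : DRG)

private lemma exists_mid {x y : Γ.V} {n : ℕ} (h : Γ.G.dist x y = n) {j : ℕ} (hj : j ≤ n) :
    ∃ z, Γ.G.dist x z = j ∧ Γ.G.dist z y = n - j := by
  obtain ⟨p, hp⟩ := Γ.conn.exists_walk_length_eq_dist x y
  obtain ⟨z, q, r, hq, hr⟩ := walk_split p j (by rw [hp, h]; exact hj)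
  have h1 : Γ.G.dist x z ≤ j := hq ▸ SimpleGraph.dist_le q
  have h2 : Γ.G.dist z y ≤ n - j := by
    have := SimpleGraph.dist_le r
    rwa [hr, hp, h] at this
  have h3 : n ≤ Γ.G.dist x z + Γ.G.dist z y := h ▸ Γ.conn.dist_triangle
  exact ⟨z, by omega, by omega⟩

private lemma exists_dist {i : ℕ} (hi : i ≤ Γ.D) : ∃ x y : Γ.V, Γ.G.dist x y = i := by
  obtain ⟨x, y, hxy⟩ := Γ.diam_eq
  obtain ⟨z, hz, -⟩ := exists_mid Γ hxy hi
  exact ⟨x, z, hz⟩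

private lemma dist_le_of_adj {x y z : Γ.V} (h : Γ.G.Adj y z) :
    Γ.G.dist x z ≤ Γ.G.dist x y + 1 := by
  have := Γ.conn.dist_triangle (u := x) (v := y) (w := z)
  rwa [SimpleGraph.dist_eq_one_iff_adj.2 h] at this

private lemma degree_eq (y : Γ.V) : (Γ.G.neighborFinset y).card = Γ.k := by
  have hb := Γ.b_eq 0 (Nat.zero_le _) y y (SimpleGraph.dist_self)
  rw [Finset.filter_true_of_mem] at hb
  · exact hb
  · intro z hz
    exact SimpleGraph.dist_eq_one_iff_adj.2 ((SimpleGraph.mem_neighborFinset _ _ _).1 hz)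

private lemma gamma_bounds (GD : GeomData Γ) (j : ℕ) (hj : j + 1 ≤ Γ.D) :
    1 ≤ GD.γ j ∧ GD.γ j ≤ Γ.a 1 + 1 := by
  classical
  obtain ⟨x, w, hxw⟩ := exists_dist Γ hj
  obtain ⟨v, hv1, hv2⟩ := exists_mid Γ hxw (Nat.le_succ j)
  have hv2' : Γ.G.dist v w = 1 := by omega
  have hadj : Γ.G.Adj v w := SimpleGraph.dist_eq_one_iff_adj.1 hv2'
  obtain ⟨C, ⟨hCcl, hvC, hwC⟩, -⟩ := GD.edge_unique v w hadj
  have hcard := GD.card_eq C hCcl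
  have hlow : ∀ z ∈ C, j ≤ Γ.G.dist x z := by
    intro z hz
    rcases eq_or_ne z w with rfl | hne
    · omega
    · have hadj' : Γ.G.Adj z w :=
        GD.isClique C hCcl (Finset.mem_coe.2 hz) (Finset.mem_coe.2 hwC) hne
      have := dist_le_of_adj Γ (x := x) hadj'
      omega
  have hγ := GD.γ_eq j x C hCcl hlow ⟨v, hvC, hv1⟩
  constructor
  · rw [← hγ]
    exact Finset.card_pos.2 ⟨v, Finset.mem_filter.2 ⟨hvC, hv1⟩⟩
  · rw [← hγ]
    have hsub : C.filter (fun z => Γ.G.dist x z = j) ⊆ C.erase w := by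
      intro z hz
      rw [Finset.mem_filter] at hz
      refine Finset.mem_erase.2 ⟨?_, hz.1⟩
      rintro rfl
      omega
    calc (C.filter (fun z => Γ.G.dist x z = j)).card ≤ (C.erase w).card :=
          Finset.card_le_card hsub
      _ = Γ.a 1 + 1 := by rw [Finset.card_erase_of_mem hwC, hcard]; omega

private lemma key (GD : GeomData Γ) (i : ℕ) (h1 : 1 ≤ i) (h2 : i ≤ Γ.D - 1) :
    ∃ P Q : ℕ,
      Γ.c i = P * GD.γ (i - 1) ∧
      Γ.b i = Q * (Γ.a 1 + 2 - GD.γ i) ∧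
      Γ.a i = P * (Γ.a 1 + 2 - GD.γ (i - 1) - 1) + Q * (GD.γ i - 1) := by
  classical
  have hiD : i + 1 ≤ Γ.D := by omega
  obtain ⟨x, y, hxy⟩ := exists_dist Γ (show i ≤ Γ.D by omega)
  -- the cliques through y
  set 𝒮 : Finset (Finset Γ.V) :=
    Finset.univ.filter (fun C => C ∈ GD.cliques ∧ y ∈ C) with h𝒮def
  have h𝒮 : ∀ C, C ∈ 𝒮 ↔ C ∈ GD.cliques ∧ y ∈ C := by
    intro C; simp [h𝒮def]
  have hadjy : ∀ C ∈ 𝒮, ∀ z ∈ C, z ≠ y → Γ.G.Adj z y := by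
    intro C hC z hz hne
    exact GD.isClique C ((h𝒮 C).1 hC).1 (Finset.mem_coe.2 hz)
      (Finset.mem_coe.2 ((h𝒮 C).1 hC).2) hne
  have hbound : ∀ C ∈ 𝒮, ∀ z ∈ C, i - 1 ≤ Γ.G.dist x z ∧ Γ.G.dist x z ≤ i + 1 := by
    intro C hC z hz
    rcases eq_or_ne z y with rfl | hne
    · omega
    · have h := hadjy C hC z hz hne
      have l1 : Γ.G.dist x z ≤ Γ.G.dist x y + 1 := dist_le_of_adj Γ h.symm
      have l2 : Γ.G.dist x y ≤ Γ.G.dist x z + 1 := dist_le_of_adj Γ h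
      omega
  set P : Finset (Finset Γ.V) :=
    𝒮.filter (fun C => ∃ z ∈ C, Γ.G.dist x z = i - 1) with hPdef
  set Q : Finset (Finset Γ.V) :=
    𝒮.filter (fun C => ¬ ∃ z ∈ C, Γ.G.dist x z = i - 1) with hQdef
  -- per-clique counts for cliques in P
  have hPcount : ∀ C ∈ P,
      (C.filter (fun z => Γ.G.dist x z = i - 1)).card = GD.γ (i - 1) ∧
      (C.filter (fun z => Γ.G.dist x z = i)).card = Γ.a 1 + 2 - GD.γ (i - 1) ∧
      ∀ z ∈ C, Γ.G.dist x z ≤ i := by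
    intro C hC
    have hC𝒮 : C ∈ 𝒮 := (Finset.mem_filter.1 hC).1
    have hCcl : C ∈ GD.cliques := ((h𝒮 C).1 hC𝒮).1
    obtain ⟨z0, hz0C, hz0⟩ := (Finset.mem_filter.1 hC).2
    have hhigh : ∀ z ∈ C, Γ.G.dist x z ≤ i := by
      intro z hz
      rcases eq_or_ne z z0 with rfl | hne
      · omega
      · have hadj : Γ.G.Adj z z0 :=
          GD.isClique C hCcl (Finset.mem_coe.2 hz) (Finset.mem_coe.2 hz0C) hne
        have := dist_le_of_adj Γ (x := x) hadj.symm
        omega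
    have hlow : ∀ z ∈ C, i - 1 ≤ Γ.G.dist x z := fun z hz => (hbound C hC𝒮 z hz).1
    have hγ := GD.γ_eq (i - 1) x C hCcl hlow ⟨z0, hz0C, hz0⟩
    refine ⟨hγ, ?_, hhigh⟩
    have hsplit := Finset.card_filter_add_card_filter_not
      (s := C) (p := fun z => Γ.G.dist x z = i - 1)
    have heq : C.filter (fun z => ¬ Γ.G.dist x z = i - 1)
        = C.filter (fun z => Γ.G.dist x z = i) := by
      apply Finset.filter_congr
      intro z hz
      have hl := hlow z hz
      have hh := hhigh z hz
      constructor
      · intro hne; omega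
      · intro he; omega
    rw [heq, hγ, GD.card_eq C hCcl] at hsplit
    omega
  -- per-clique counts for cliques in Q
  have hQcount : ∀ C ∈ Q,
      (C.filter (fun z => Γ.G.dist x z = i)).card = GD.γ i ∧
      (C.filter (fun z => Γ.G.dist x z = i + 1)).card = Γ.a 1 + 2 - GD.γ i := by
    intro C hC
    have hC𝒮 : C ∈ 𝒮 := (Finset.mem_filter.1 hC).1
    have hCcl : C ∈ GD.cliques := ((h𝒮 C).1 hC𝒮).1
    have hnp := (Finset.mem_filter.1 hC).2
    have hlow : ∀ z ∈ C, i ≤ Γ.G.dist x z := by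
      intro z hz
      have hb := (hbound C hC𝒮 z hz).1
      have : Γ.G.dist x z ≠ i - 1 := fun h => hnp ⟨z, hz, h⟩
      omega
    have hyC : y ∈ C := ((h𝒮 C).1 hC𝒮).2
    have hγ := GD.γ_eq i x C hCcl hlow ⟨y, hyC, hxy⟩
    refine ⟨hγ, ?_⟩
    have hsplit := Finset.card_filter_add_card_filter_not
      (s := C) (p := fun z => Γ.G.dist x z = i)
    have heq : C.filter (fun z => ¬ Γ.G.dist x z = i)
        = C.filter (fun z => Γ.G.dist x z = i + 1) := by
      apply Finset.filter_congr
      intro z hz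
      have hl := hlow z hz
      have hh := (hbound C hC𝒮 z hz).2
      constructor
      · intro hne; omega
      · intro he; omega
    rw [heq, hγ, GD.card_eq C hCcl] at hsplit
    omega
  -- disjointness of the pieces
  have hdisj : ∀ (f : Finset Γ.V → Finset Γ.V), (∀ C, f C ⊆ C) →
      (∀ C, ∀ z ∈ f C, z ≠ y) →
      ∀ C ∈ 𝒮, ∀ C' ∈ 𝒮, C ≠ C' → Disjoint (f C) (f C') := by
    intro f hsub hney C hC C' hC' hne
    rw [Finset.disjoint_left]
    intro z hz hz'
    apply hne
    have hzy : Γ.G.Adj z y := hadjy C hC z (hsub C hz) (hney C z hz)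
    obtain ⟨U, -, hUuniq⟩ := GD.edge_unique z y hzy
    have e1 := hUuniq C ⟨((h𝒮 C).1 hC).1, hsub C hz, ((h𝒮 C).1 hC).2⟩
    have e2 := hUuniq C' ⟨((h𝒮 C').1 hC').1, hsub C' hz', ((h𝒮 C').1 hC').2⟩
    rw [e1, e2]
  -- identification of the three neighbour sets
  have hFc : (Γ.G.neighborFinset y).filter (fun z => Γ.G.dist x z = i - 1)
      = P.biUnion (fun C => C.filter (fun z => Γ.G.dist x z = i - 1)) := by
    ext z
    simp only [Finset.mem_biUnion, Finset.mem_filter, SimpleGraph.mem_neighborFinset]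
    constructor
    · rintro ⟨hadj, hdz⟩
      obtain ⟨C, ⟨hCcl, hyC, hzC⟩, -⟩ := GD.edge_unique y z hadj
      exact ⟨C, Finset.mem_filter.2 ⟨(h𝒮 C).2 ⟨hCcl, hyC⟩, ⟨z, hzC, hdz⟩⟩, hzC, hdz⟩
    · rintro ⟨C, hCP, hzC, hdz⟩
      have hC𝒮 : C ∈ 𝒮 := (Finset.mem_filter.1 hCP).1
      have hzy : z ≠ y := by rintro rfl; omega
      exact ⟨(hadjy C hC𝒮 z hzC hzy).symm, hdz⟩
  have hFb : (Γ.G.neighborFinset y).filter (fun z => Γ.G.dist x z = i + 1)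
      = Q.biUnion (fun C => C.filter (fun z => Γ.G.dist x z = i + 1)) := by
    ext z
    simp only [Finset.mem_biUnion, Finset.mem_filter, SimpleGraph.mem_neighborFinset]
    constructor
    · rintro ⟨hadj, hdz⟩
      obtain ⟨C, ⟨hCcl, hyC, hzC⟩, -⟩ := GD.edge_unique y z hadj
      have hC𝒮 : C ∈ 𝒮 := (h𝒮 C).2 ⟨hCcl, hyC⟩
      refine ⟨C, Finset.mem_filter.2 ⟨hC𝒮, ?_⟩, hzC, hdz⟩
      intro hex
      have hCP : C ∈ P := Finset.mem_filter.2 ⟨hC𝒮, hex⟩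
      have := (hPcount C hCP).2.2 z hzC
      omega
    · rintro ⟨C, hCQ, hzC, hdz⟩
      have hC𝒮 : C ∈ 𝒮 := (Finset.mem_filter.1 hCQ).1
      have hzy : z ≠ y := by rintro rfl; omega
      exact ⟨(hadjy C hC𝒮 z hzC hzy).symm, hdz⟩
  have hFa : (Γ.G.neighborFinset y).filter (fun z => Γ.G.dist x z = i)
      = 𝒮.biUnion (fun C => (C.filter (fun z => Γ.G.dist x z = i)).erase y) := by
    ext z
    simp only [Finset.mem_biUnion, Finset.mem_filter, Finset.mem_erase,
      SimpleGraph.mem_neighborFinset]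
    constructor
    · rintro ⟨hadj, hdz⟩
      obtain ⟨C, ⟨hCcl, hyC, hzC⟩, -⟩ := GD.edge_unique y z hadj
      exact ⟨C, (h𝒮 C).2 ⟨hCcl, hyC⟩, ⟨hadj.ne', hzC, hdz⟩⟩
    · rintro ⟨C, hC𝒮, hzy, hzC, hdz⟩
      exact ⟨(hadjy C hC𝒮 z hzC hzy).symm, hdz⟩
  -- cardinalities
  have hcC : Γ.c i = P.card * GD.γ (i - 1) := by
    have hceq := Γ.c_eq i h1 (by omega) x y hxy
    rw [hFc] at hceq
    rw [← hceq, Finset.card_biUnion]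
    · rw [Finset.sum_congr rfl (fun C hC => (hPcount C hC).1), Finset.sum_const, smul_eq_mul]
    · intro C hC C' hC' hne
      refine hdisj _ (fun C => Finset.filter_subset _ _) ?_
        C ((Finset.mem_filter.1 hC).1) C' ((Finset.mem_filter.1 hC').1) hne
      intro C0 z hz
      rw [Finset.mem_filter] at hz
      rintro rfl
      omega
  have hbC : Γ.b i = Q.card * (Γ.a 1 + 2 - GD.γ i) := by
    have hbeq := Γ.b_eq i (by omega) x y hxy
    rw [hFb] at hbeq
    rw [← hbeq, Finset.card_biUnion]
    · rw [Finset.sum_congr rfl (fun C hC => (hQcount C hC).2), Finset.sum_const, smul_eq_mul]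
    · intro C hC C' hC' hne
      refine hdisj _ (fun C => Finset.filter_subset _ _) ?_
        C ((Finset.mem_filter.1 hC).1) C' ((Finset.mem_filter.1 hC').1) hne
      intro C0 z hz
      rw [Finset.mem_filter] at hz
      rintro rfl
      omega
  have haC : ((Γ.G.neighborFinset y).filter (fun z => Γ.G.dist x z = i)).card
      = P.card * (Γ.a 1 + 2 - GD.γ (i - 1) - 1) + Q.card * (GD.γ i - 1) := by
    rw [hFa, Finset.card_biUnion]
    · have hterm : ∀ C ∈ 𝒮, ((C.filter (fun z => Γ.G.dist x z = i)).erase y).card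
          = (C.filter (fun z => Γ.G.dist x z = i)).card - 1 := by
        intro C hC
        rw [Finset.card_erase_of_mem]
        exact Finset.mem_filter.2 ⟨((h𝒮 C).1 hC).2, hxy⟩
      rw [Finset.sum_congr rfl hterm,
        ← Finset.sum_filter_add_sum_filter_not 𝒮 (fun C => ∃ z ∈ C, Γ.G.dist x z = i - 1)]
      have hPsum : ∑ C ∈ P, ((C.filter (fun z => Γ.G.dist x z = i)).card - 1)
          = P.card * (Γ.a 1 + 2 - GD.γ (i - 1) - 1) := by
        rw [Finset.sum_congr rfl (fun C hC => by rw [(hPcount C hC).2.1]),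
          Finset.sum_const, smul_eq_mul]
      have hQsum : ∑ C ∈ Q, ((C.filter (fun z => Γ.G.dist x z = i)).card - 1)
          = Q.card * (GD.γ i - 1) := by
        rw [Finset.sum_congr rfl (fun C hC => by rw [(hQcount C hC).1]),
          Finset.sum_const, smul_eq_mul]
      rw [← hPdef, ← hQdef] at *
      rw [hPsum, hQsum]
    · intro C hC C' hC' hne
      refine hdisj _ (fun C => (Finset.erase_subset _ _).trans (Finset.filter_subset _ _)) ?_
        C hC C' hC' hne
      intro C0 z hz
      exact (Finset.mem_erase.1 hz).1
  -- the partition of the neighbourhood of y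
  have hNb : ∀ z ∈ Γ.G.neighborFinset y,
      i - 1 ≤ Γ.G.dist x z ∧ Γ.G.dist x z ≤ i + 1 := by
    intro z hz
    have hadj : Γ.G.Adj y z := (SimpleGraph.mem_neighborFinset _ _ _).1 hz
    have l1 : Γ.G.dist x z ≤ Γ.G.dist x y + 1 := dist_le_of_adj Γ hadj
    have l2 : Γ.G.dist x y ≤ Γ.G.dist x z + 1 := dist_le_of_adj Γ hadj.symm
    omega
  have hkpart :
      ((Γ.G.neighborFinset y).filter (fun z => Γ.G.dist x z = i - 1)).card
      + ((Γ.G.neighborFinset y).filter (fun z => Γ.G.dist x z = i)).card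
      + ((Γ.G.neighborFinset y).filter (fun z => Γ.G.dist x z = i + 1)).card = Γ.k := by
    have h0 := Finset.card_filter_add_card_filter_not
      (s := Γ.G.neighborFinset y) (p := fun z => Γ.G.dist x z = i - 1)
    have h1' := Finset.card_filter_add_card_filter_not
      (s := (Γ.G.neighborFinset y).filter (fun z => ¬ Γ.G.dist x z = i - 1))
      (p := fun z => Γ.G.dist x z = i)
    rw [Finset.filter_filter, Finset.filter_filter] at h1'
    have e1 : (Γ.G.neighborFinset y).filter (fun z => ¬ Γ.G.dist x z = i - 1 ∧ Γ.G.dist x z = i)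
        = (Γ.G.neighborFinset y).filter (fun z => Γ.G.dist x z = i) := by
      apply Finset.filter_congr
      intro z hz
      have := hNb z hz
      constructor
      · intro h; omega
      · intro h; omega
    have e2 : (Γ.G.neighborFinset y).filter
          (fun z => ¬ Γ.G.dist x z = i - 1 ∧ ¬ Γ.G.dist x z = i)
        = (Γ.G.neighborFinset y).filter (fun z => Γ.G.dist x z = i + 1) := by
      apply Finset.filter_congr
      intro z hz
      have := hNb z hz
      constructor
      · intro h; omega
      · intro h; omega
    rw [e1, e2] at h1'
    rw [degree_eq Γ y] at h0
    omega
  refine ⟨P.card, Q.card, hcC, hbC, ?_⟩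
  have ha : Γ.a i = Γ.k - Γ.b i - Γ.c i := rfl
  have hceq := Γ.c_eq i h1 (by omega) x y hxy
  have hbeq := Γ.b_eq i (by omega) x y hxy
  omega

end DRGproof

end AuxProof

/-- the intersection numbers of a geometric distance-regular graph
satisfy `a_i = c_i (a₁+1-γ_{i-1})/γ_{i-1} + b_i (γ_i - 1)/(a₁+2-γ_i)`; in
particular `a_i = c_i a₁` when `γ_{i-1} = γ_i = 1`. -/
theorem stmt7 (Γ : DRG) (S : SpecData Γ) (GD : GeomData Γ)
    (hk : 3 ≤ Γ.k) (hD : 2 ≤ Γ.D)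
    (hθ : S.θ (Fin.last Γ.D) = -(Γ.k : ℝ) / ((Γ.a 1 : ℝ) + 1)) :
    ∀ i : ℕ, 1 ≤ i → i ≤ Γ.D - 1 →
      ((Γ.a i : ℝ) =
        (Γ.c i : ℝ) * ((Γ.a 1 : ℝ) + 1 - (GD.γ (i - 1) : ℝ)) / (GD.γ (i - 1) : ℝ) +
          (Γ.b i : ℝ) * ((GD.γ i : ℝ) - 1) / ((Γ.a 1 : ℝ) + 2 - (GD.γ i : ℝ))) ∧
      (GD.γ (i - 1) = 1 → GD.γ i = 1 → Γ.a i = Γ.c i * Γ.a 1) := by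
  intro i hi1 hi2
  obtain ⟨Pn, Qn, hc, hb, ha⟩ := DRGproof.key Γ GD i hi1 hi2
  have hiD : i + 1 ≤ Γ.D := by omega
  obtain ⟨hγi1, hγi2⟩ := DRGproof.gamma_bounds Γ GD i hiD
  obtain ⟨hγm1, hγm2⟩ := DRGproof.gamma_bounds Γ GD (i - 1) (by omega)
  constructor
  · have hα0 : (GD.γ (i - 1) : ℝ) ≠ 0 := by
      have : (0 : ℝ) < (GD.γ (i - 1) : ℝ) := by exact_mod_cast hγm1
      linarith
    have hβ0 : (Γ.a 1 : ℝ) + 2 - (GD.γ i : ℝ) ≠ 0 := by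
      have : (GD.γ i : ℝ) ≤ (Γ.a 1 : ℝ) + 1 := by exact_mod_cast hγi2
      linarith
    have c1 : ((Γ.a 1 + 2 - GD.γ (i - 1) - 1 : ℕ) : ℝ)
        = (Γ.a 1 : ℝ) + 1 - (GD.γ (i - 1) : ℝ) := by
      rw [show Γ.a 1 + 2 - GD.γ (i - 1) - 1 = Γ.a 1 + 1 - GD.γ (i - 1) from by omega,
        Nat.cast_sub hγm2]
      push_cast
      ring
    have c2 : ((Γ.a 1 + 2 - GD.γ i : ℕ) : ℝ) = (Γ.a 1 : ℝ) + 2 - (GD.γ i : ℝ) := by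
      rw [Nat.cast_sub (by omega)]
      push_cast
      ring
    have c3 : ((GD.γ i - 1 : ℕ) : ℝ) = (GD.γ i : ℝ) - 1 := by
      rw [Nat.cast_sub hγi1]
      push_cast
      ring
    rw [ha, hc, hb]
    push_cast [c1, c2, c3]
    field_simp
  · intro hm hi'
    rw [ha, hc, hm, hi']
    have e : Γ.a 1 + 2 - 1 - 1 = Γ.a 1 := by omega
    rw [e]
    simp
end

section
/- Fix an integer q = a₁ + 1 ≥ 2 and real k > 0, and define θ' = (k − q(q+1))/q², α = (q)/(a₁k + q) and β = a₁k/(a₁k + q) where a₁ = q − 1. Suppose sequences u_i and v_i (0 ≤ i ≤ m+1) satisfy u_i = (−1/q)^i, u_i² = α + β v_i, and for 1 ≤ i ≤ m: c_i v_{i−1} + a_i v_i + b_i v_{i+1} = θ' v_i with a_i = c_i a₁ and b_i = k − c_i q, c₁ = 1. Then c_i = (q^{2i} − 1)/(q² − 1) for 0 ≤ i ≤ m. -/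
open Finset Matrix

/-- algebraic core of Theorem 1.1: the light-tail relation
`u_i² = α + β v_i` together with the three-term recurrence for `v` (standard
sequence of `θ' = (k - q(q+1))/q²`) and `a_i = c_i a₁`, `b_i = k - c_i q`
forces `c_i = (q^{2i} - 1)/(q² - 1)`. Here `q = a₁ + 1`. -/
theorem stmt9 (q : ℕ) (hq : 2 ≤ q) (k : ℝ) (hk : 0 < k) (m : ℕ)
    (u v cc : ℕ → ℝ)
    (hu : ∀ i ≤ m + 1, u i = (-(1 : ℝ) / (q : ℝ)) ^ i)
    (huv : ∀ i ≤ m + 1, (u i) ^ 2 =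
      (q : ℝ) / (((q : ℝ) - 1) * k + (q : ℝ)) +
        (((q : ℝ) - 1) * k / (((q : ℝ) - 1) * k + (q : ℝ))) * v i)
    (hc0 : cc 0 = 0) (hc1 : cc 1 = 1)
    (hrec : ∀ i : ℕ, 1 ≤ i → i ≤ m →
      cc i * v (i - 1) + (cc i * ((q : ℝ) - 1)) * v i + (k - cc i * (q : ℝ)) * v (i + 1) =
        ((k - (q : ℝ) * ((q : ℝ) + 1)) / (q : ℝ) ^ 2) * v i) :
    ∀ i ≤ m, cc i = ((q : ℝ) ^ (2 * i) - 1) / ((q : ℝ) ^ 2 - 1) := by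
  set Q : ℝ := (q : ℝ) with hQdef
  have hQ2 : (2 : ℝ) ≤ Q := by rw [hQdef]; exact_mod_cast hq
  have hQ0 : (0 : ℝ) < Q := by linarith
  have hQ1 : (1 : ℝ) < Q := by linarith
  have hQne : Q ≠ 0 := ne_of_gt hQ0
  have hQm1 : Q - 1 ≠ 0 := by intro h; linarith
  have hD0 : (0 : ℝ) < (Q - 1) * k := mul_pos (by linarith) hk
  have hD : (Q - 1) * k ≠ 0 := ne_of_gt hD0
  have hS0 : (0 : ℝ) < (Q - 1) * k + Q := by positivity
  have hS : (Q - 1) * k + Q ≠ 0 := ne_of_gt hS0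
  have hQ2m1 : Q ^ 2 - 1 ≠ 0 := by nlinarith
  -- squared u
  have hu2 : ∀ j ≤ m + 1, (u j) ^ 2 = (1 / Q ^ 2) ^ j := by
    intro j hj
    rw [hu j hj, ← pow_mul, mul_comm j 2, pow_mul]
    congr 1
    ring
  -- explicit v
  have hv : ∀ j ≤ m + 1, v j = ((1 / Q ^ 2) ^ j * ((Q - 1) * k + Q) - Q) / ((Q - 1) * k) := by
    intro j hj
    have h := huv j hj
    rw [hu2 j hj] at h
    field_simp at h
    rw [eq_div_iff hD]
    have hp : (1 / Q ^ 2) ^ j * (Q ^ 2) ^ j = 1 := by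
      rw [← mul_pow, one_div_mul_cancel (by positivity), one_pow]
    linear_combination (-1 : ℝ) * h
  intro i hi
  rcases Nat.eq_zero_or_pos i with h0 | h1
  · subst h0; simp [hc0]
  -- main case
  have hX0 : (0 : ℝ) < Q ^ i := by positivity
  have hX : Q ^ i ≠ 0 := ne_of_gt hX0
  set X : ℝ := Q ^ i with hXdef
  have e2 : (1 / Q ^ 2) ^ i = 1 / X ^ 2 := by
    rw [div_pow, one_pow, hXdef, ← pow_mul, ← pow_mul, mul_comm]
  have e3 : (1 / Q ^ 2) ^ (i + 1) = 1 / (X ^ 2 * Q ^ 2) := by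
    rw [pow_succ, e2]; field_simp
  have e1 : (1 / Q ^ 2) ^ (i - 1) = Q ^ 2 / X ^ 2 := by
    have h' : i - 1 + 1 = i := Nat.succ_pred_eq_of_pos h1
    have := e2
    rw [← h', pow_succ] at this
    field_simp at this ⊢
    -- this : (1/Q^2)^(i-1) * (1/Q^2) * X^2 = 1  maybe; solve
    nlinarith [this, sq_nonneg X]
  have hvm := hv (i - 1) (by omega)
  have hvi := hv i (by omega)
  have hvp := hv (i + 1) (by omega)
  rw [e1] at hvm
  rw [e2] at hvi
  rw [e3] at hvp
  have hr := hrec i h1 hi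
  rw [hvm, hvi, hvp] at hr
  have hgoal2 : Q ^ (2 * i) = X ^ 2 := by rw [mul_comm, pow_mul]
  rw [hgoal2]
  -- denominator (the bracket) value
  have hA : v (i-1) + (Q - 1) * v i - Q * v (i+1) =
      ((Q - 1) * k + Q) * ((Q - 1) * (Q + 1) ^ 2) / (Q * X ^ 2 * ((Q - 1) * k)) := by
    rw [hvm, hvi, hvp]
    field_simp
    ring
  have hApos : (0:ℝ) < v (i-1) + (Q - 1) * v i - Q * v (i+1) := by
    rw [hA]
    exact div_pos (mul_pos hS0 (mul_pos (by linarith) (by positivity)))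
      (mul_pos (mul_pos hQ0 (pow_pos hX0 2)) hD0)
  have hAne := ne_of_gt hApos
  have hcc : cc i * (v (i-1) + (Q - 1) * v i - Q * v (i+1)) =
      ((k - Q * (Q + 1)) / Q ^ 2) * v i - k * v (i + 1) := by
    have := hrec i h1 hi
    linear_combination this
  have : cc i = (((k - Q * (Q + 1)) / Q ^ 2) * v i - k * v (i + 1)) /
      (v (i-1) + (Q - 1) * v i - Q * v (i+1)) := by
    rw [eq_div_iff hAne]; linear_combination hcc
  rw [this, hA, hvi, hvp]
  have hS' : k * (Q - 1) + Q ≠ 0 := by intro h; apply hS; linear_combination h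
  field_simp
  ring
end

section
/- Let Γ be a distance-regular graph with n vertices, valency k, and minimal idempotents E₀, …, E_D with multiplicities m_i. Writing (n/m_D)E_D = Σ_j u_j(θ_D) A_j in terms of the distance matrices A_j, one has ((n/m_D)E_D) ∘ ((n/m_D)E_D) = Σ_i u_i(θ_D)² A_i = (1/m_D)J + ((m_D−1)/m_D) Ẽ, where Ẽ = Σ_j ũ_j A_j with ũ_j = Σ_{i=1}^{D} α_i u_j(θ_i), α_i = m_i q_{DD}^i / (m_D(m_D − 1)) ≥ 0, and Σ_{i=1}^D α_i = 1. Consequently u_j(θ_D)² = 1/m_D + ((m_D−1)/m_D)·ũ_j for all 0 ≤ j ≤ D. -/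
open Finset Matrix

lemma aux_n_pos (Γ : DRG) : 0 < (Γ.n : ℝ) := by
  have : Nonempty Γ.V := Γ.conn.nonempty
  have : 0 < Γ.n := Fintype.card_pos
  exact_mod_cast this

lemma aux_m_pos (Γ : DRG) (S : SpecData Γ) (i : Fin (Γ.D + 1)) : 0 < (S.m i : ℝ) := by
  rw [S.m_eq]
  have h1 : S.E i = (S.E i)ᵀ * S.E i := by
    rw [S.E_symm]
    have := S.E_mul i i
    simpa using this.symm
  have h2 : (S.E i).trace = ∑ a : Γ.V, ∑ b : Γ.V, (S.E i b a) ^ 2 := by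
    conv_lhs => rw [h1]
    simp [Matrix.trace, Matrix.diag, Matrix.mul_apply, Matrix.transpose_apply, sq]
  obtain ⟨a, b, hab⟩ : ∃ a b, S.E i a b ≠ 0 := by
    by_contra h
    push_neg at h
    exact S.E_ne i (by ext a b; simpa using h a b)
  rw [h2]
  apply Finset.sum_pos'
  · intro c _
    exact Finset.sum_nonneg fun d _ => sq_nonneg _
  · refine ⟨b, Finset.mem_univ _, Finset.sum_pos' (fun d _ => sq_nonneg _)
      ⟨a, Finset.mem_univ _, ?_⟩⟩
    exact lt_of_le_of_ne (sq_nonneg _) (Ne.symm (pow_ne_zero 2 hab))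

lemma aux_walk_split {V : Type} {G : SimpleGraph V} {x y : V} (p : G.Walk x y) :
    ∀ j ≤ p.length, ∃ (z : V) (q : G.Walk x z) (r : G.Walk z y),
      q.length = j ∧ r.length = p.length - j := by
  induction p with
  | nil =>
    intro j hj
    simp only [SimpleGraph.Walk.length_nil, Nat.le_zero] at hj
    subst hj
    exact ⟨_, SimpleGraph.Walk.nil, SimpleGraph.Walk.nil, rfl, rfl⟩
  | cons h q ih =>
    intro j hj
    cases j with
    | zero => exact ⟨_, SimpleGraph.Walk.nil, SimpleGraph.Walk.cons h q, rfl, rfl⟩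
    | succ n =>
      obtain ⟨z, q', r', hq', hr'⟩ := ih n (by simp at hj; omega)
      exact ⟨z, SimpleGraph.Walk.cons h q', r', by simp [hq'], by simp [hr']⟩

lemma aux_exists_dist (Γ : DRG) (j : ℕ) (hj : j ≤ Γ.D) :
    ∃ x y : Γ.V, Γ.G.dist x y = j := by
  obtain ⟨x, y, hxy⟩ := Γ.diam_eq
  obtain ⟨p, hp⟩ := Γ.conn.exists_walk_length_eq_dist x y
  obtain ⟨z, q, r, hq, hr⟩ := aux_walk_split p j (by rw [hp, hxy]; exact hj)
  have h1 : Γ.G.dist x z ≤ j := hq ▸ SimpleGraph.dist_le q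
  have h2 : Γ.G.dist z y ≤ p.length - j := hr ▸ SimpleGraph.dist_le r
  have h3 : Γ.G.dist x y ≤ Γ.G.dist x z + Γ.G.dist z y := Γ.conn.dist_triangle
  exact ⟨x, z, by omega⟩

lemma aux_sum_Amat_apply (Γ : DRG) (f : ℕ → ℝ) (x y : Γ.V) :
    (∑ j ∈ Finset.range (Γ.D + 1), f j • Γ.Amat j) x y = f (Γ.G.dist x y) := by
  have hd : Γ.G.dist x y ∈ Finset.range (Γ.D + 1) :=
    Finset.mem_range.mpr (Nat.lt_succ_of_le (Γ.diam_le x y))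
  rw [Matrix.sum_apply]
  rw [Finset.sum_eq_single (Γ.G.dist x y)]
  · simp [DRG.Amat]
  · intro j _ hne
    simp [DRG.Amat, Ne.symm hne]
  · exact fun h => absurd hd h

/-- the Schur square of `(n/m_D)E_D` expanded in the distance
matrices: it equals `∑ u_i(θ_D)² A_i = (1/m_D)J + ((m_D-1)/m_D)Ẽ` with
`Ẽ = ∑_j ũ_j A_j`, `ũ_j = ∑_{i≠0} α_i u_j(θ_i)`,
`α_i = m_i q_{DD}^i/(m_D(m_D-1)) ≥ 0`, `∑_{i≠0} α_i = 1`, and consequently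
`u_j(θ_D)² = 1/m_D + ((m_D-1)/m_D) ũ_j`. -/
theorem stmt11 (Γ : DRG) (S : SpecData Γ) (hk : 3 ≤ Γ.k)
    (hmD : 2 ≤ S.m (Fin.last Γ.D))
    (qDD : Fin (Γ.D + 1) → ℝ)
    (hq_exp : Matrix.hadamard (S.E (Fin.last Γ.D)) (S.E (Fin.last Γ.D)) =
      ((Γ.n : ℝ))⁻¹ • ∑ h : Fin (Γ.D + 1), qDD h • S.E h)
    (hq_nonneg : ∀ h, 0 ≤ qDD h)
    (hq_zero : qDD 0 = (S.m (Fin.last Γ.D) : ℝ))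
    (uu : Fin (Γ.D + 1) → ℕ → ℝ)
    (huu : ∀ i, StdSeq Γ (S.θ i) (uu i))
    (huu_exp : ∀ i, ((Γ.n : ℝ) / (S.m i : ℝ)) • S.E i =
      ∑ j ∈ Finset.range (Γ.D + 1), uu i j • Γ.Amat j)
    (α : Fin (Γ.D + 1) → ℝ)
    (hα : ∀ i, α i = (S.m i : ℝ) * qDD i /
      ((S.m (Fin.last Γ.D) : ℝ) * ((S.m (Fin.last Γ.D) : ℝ) - 1)))
    (tu : ℕ → ℝ)
    (htu : ∀ j, tu j = ∑ i ∈ Finset.univ.erase (0 : Fin (Γ.D + 1)), α i * uu i j) :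
    Matrix.hadamard (((Γ.n : ℝ) / (S.m (Fin.last Γ.D) : ℝ)) • S.E (Fin.last Γ.D))
        (((Γ.n : ℝ) / (S.m (Fin.last Γ.D) : ℝ)) • S.E (Fin.last Γ.D)) =
      ∑ j ∈ Finset.range (Γ.D + 1), (uu (Fin.last Γ.D) j) ^ 2 • Γ.Amat j ∧
    Matrix.hadamard (((Γ.n : ℝ) / (S.m (Fin.last Γ.D) : ℝ)) • S.E (Fin.last Γ.D))
        (((Γ.n : ℝ) / (S.m (Fin.last Γ.D) : ℝ)) • S.E (Fin.last Γ.D)) =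
      ((S.m (Fin.last Γ.D) : ℝ))⁻¹ • (Matrix.of fun _ _ => (1 : ℝ)) +
        (((S.m (Fin.last Γ.D) : ℝ) - 1) / (S.m (Fin.last Γ.D) : ℝ)) •
          ∑ j ∈ Finset.range (Γ.D + 1), tu j • Γ.Amat j ∧
    (∀ i, 0 ≤ α i) ∧
    (∑ i ∈ Finset.univ.erase (0 : Fin (Γ.D + 1)), α i) = 1 ∧
    ∀ j ≤ Γ.D, (uu (Fin.last Γ.D) j) ^ 2 =
      ((S.m (Fin.last Γ.D) : ℝ))⁻¹ +
        (((S.m (Fin.last Γ.D) : ℝ) - 1) / (S.m (Fin.last Γ.D) : ℝ)) * tu j := by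
  set L := Fin.last Γ.D with hL
  set M : ℝ := (S.m L : ℝ) with hM
  have hn : (0 : ℝ) < (Γ.n : ℝ) := aux_n_pos Γ
  have hn' : (Γ.n : ℝ) ≠ 0 := ne_of_gt hn
  have hM2 : (2 : ℝ) ≤ M := by rw [hM]; exact_mod_cast hmD
  have hM0 : M ≠ 0 := by linarith
  have hM1 : M - 1 ≠ 0 := by intro h; nlinarith
  have hm : ∀ h, (S.m h : ℝ) ≠ 0 := fun h => ne_of_gt (aux_m_pos Γ S h)
  -- entrywise formula for (n/m_i) E_i
  have hentry : ∀ i (x y : Γ.V),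
      ((Γ.n : ℝ) / (S.m i : ℝ)) * S.E i x y = uu i (Γ.G.dist x y) := by
    intro i x y
    have h := congr_arg (fun Mt : Matrix Γ.V Γ.V ℝ => Mt x y) (huu_exp i)
    simpa [aux_sum_Amat_apply] using h
  -- entry of E h in terms of uu
  have hEentry : ∀ h (x y : Γ.V),
      S.E h x y = (S.m h : ℝ) * uu h (Γ.G.dist x y) / (Γ.n : ℝ) := by
    intro h x y
    have h6 := hentry h x y
    rw [div_mul_eq_mul_div, div_eq_iff (hm h)] at h6
    rw [eq_div_iff hn']
    linarith
  have hE0 : ∀ x y : Γ.V, S.E 0 x y = ((Γ.n : ℝ))⁻¹ := by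
    intro x y
    rw [S.E_zero]
    simp
  -- the scalar core identity
  have core : ∀ x y : Γ.V,
      uu L (Γ.G.dist x y) ^ 2 = M⁻¹ + (M - 1) / M * tu (Γ.G.dist x y) := by
    intro x y
    set d := Γ.G.dist x y with hd
    have hEL := hentry L x y
    have hHad := congr_arg (fun Mt : Matrix Γ.V Γ.V ℝ => Mt x y) hq_exp
    simp only [Matrix.hadamard_apply, Matrix.smul_apply, Matrix.sum_apply,
      smul_eq_mul] at hHad
    have e1 : uu L d ^ 2 = ((Γ.n : ℝ) / M) ^ 2 * (S.E L x y * S.E L x y) := by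
      rw [← hEL]; ring
    rw [e1, hHad, Finset.mul_sum, Finset.mul_sum,
      ← Finset.add_sum_erase _ _ (Finset.mem_univ (0 : Fin (Γ.D + 1))), htu,
      Finset.mul_sum]
    congr 1
    · rw [hq_zero, hE0 x y]
      field_simp
    · refine Finset.sum_congr rfl fun h _ => ?_
      rw [hEentry h x y, hα h]
      field_simp
      ring
  -- first conjunct
  have eq1 : Matrix.hadamard (((Γ.n : ℝ) / M) • S.E L) (((Γ.n : ℝ) / M) • S.E L) =
      ∑ j ∈ Finset.range (Γ.D + 1), (uu L j) ^ 2 • Γ.Amat j := by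
    rw [huu_exp L]
    ext x y
    simp only [Matrix.hadamard_apply, aux_sum_Amat_apply]
    ring
  have eq2 : Matrix.hadamard (((Γ.n : ℝ) / M) • S.E L) (((Γ.n : ℝ) / M) • S.E L) =
      M⁻¹ • (Matrix.of fun _ _ => (1 : ℝ)) +
        ((M - 1) / M) • ∑ j ∈ Finset.range (Γ.D + 1), tu j • Γ.Amat j := by
    rw [eq1]
    ext x y
    simp only [Matrix.add_apply, Matrix.smul_apply, aux_sum_Amat_apply,
      Matrix.of_apply, smul_eq_mul]
    rw [core x y]
    ring
  refine ⟨eq1, eq2, ?_, ?_, ?_⟩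
  · intro i
    rw [hα i]
    apply div_nonneg (mul_nonneg (S.m i).cast_nonneg (hq_nonneg i))
    apply mul_nonneg (by linarith) (by linarith)
  · -- sum of α equals 1, from the core identity at a diagonal entry
    have hne : Nonempty Γ.V := Γ.conn.nonempty
    obtain ⟨x⟩ := hne
    have hc := core x x
    rw [SimpleGraph.dist_self] at hc
    have hu0 : uu L 0 = 1 := (huu L).1
    have htu0 : tu 0 = ∑ i ∈ Finset.univ.erase (0 : Fin (Γ.D + 1)), α i := by
      rw [htu]
      exact Finset.sum_congr rfl fun i _ => by rw [(huu i).1, mul_one]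
    rw [hu0, htu0] at hc
    have h2 : (M - 1) * (∑ i ∈ Finset.univ.erase (0 : Fin (Γ.D + 1)), α i)
        = (M - 1) * 1 := by
      field_simp at hc
      rw [Finset.sum_erase_eq_sub (Finset.mem_univ (0 : Fin (Γ.D + 1)))] at hc ⊢
      linarith
    exact mul_left_cancel₀ hM1 h2
  · intro j hj
    obtain ⟨x, y, hxy⟩ := aux_exists_dist Γ j hj
    have := core x y
    rwa [hxy] at this
end

section
/- Let Γ be a geometric distance-regular graph with valency k ≥ 3, diameter D ≥ 3, smallest eigenvalue θ_D = −k/(a₁+1), whose clique parameters satisfy γ_i = 1 for 0 ≤ i ≤ m where 2 ≤ m ≤ D−2, and with a_i = c_i a₁ for i ≤ m. Then k > (a₁+1) c_{m+1}; in particular, if moreover c_{m+1} ≥ ((a₁+1)^{2(m+1)} − 1)/((a₁+1)² − 1), then k > (a₁+1)·((a₁+1)^{2(m+1)} − 1)/((a₁+1)² − 1). -/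
open Finset Matrix

lemma my_exists_adj_dist {V : Type} (G : SimpleGraph V) (hc : G.Connected) {x y : V} {n : ℕ}
    (h : G.dist x y = n + 1) : ∃ z, G.Adj z y ∧ G.dist x z = n := by
  obtain ⟨p, hp⟩ := (hc x y).exists_walk_length_eq_dist
  rw [h] at hp
  cases hpr : p.reverse with
  | nil =>
      have := congrArg SimpleGraph.Walk.length hpr
      simp [hp] at this
  | cons a q =>
      rename_i z
      refine ⟨z, a.symm, ?_⟩
      have hlq : q.length = n := by
        have := congrArg SimpleGraph.Walk.length hpr
        simp [hp] at this
        omega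
      have h1 : G.dist x z ≤ n := by
        have := SimpleGraph.dist_le q.reverse
        simpa [hlq] using this
      have h2 : G.dist x y ≤ G.dist x z + G.dist z y := hc.dist_triangle
      have h3 : G.dist z y = 1 := SimpleGraph.dist_eq_one_iff_adj.mpr a.symm
      omega

lemma my_exists_dist_eq {V : Type} (G : SimpleGraph V) (hc : G.Connected) {x : V} :
    ∀ (n : ℕ) (y : V), G.dist x y = n → ∀ i ≤ n, ∃ z, G.dist x z = i := by
  intro n
  induction n with
  | zero => intro y _ i hi; exact ⟨x, by simpa [Nat.le_zero.mp hi] using SimpleGraph.dist_self⟩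
  | succ n ih =>
      intro y hy i hi
      rcases Nat.eq_or_lt_of_le hi with h | h
      · exact ⟨y, by omega⟩
      · obtain ⟨z, _, hz⟩ := my_exists_adj_dist G hc hy
        exact ih z hz i (by omega)

/-- The clique through an edge `y z` with `d(x,z)=m`, `d(x,y)=m+1`, `γ_m = 1`:
`z` is the unique vertex of `C` at distance `m`, and every other vertex is
adjacent to `y` and at distance `m+1`. -/
lemma clique_step (Γ : DRG) (GD : GeomData Γ) {m : ℕ} (hγm : GD.γ m = 1)
    {x y z : Γ.V} (hxy : Γ.G.dist x y = m + 1) (hadj : Γ.G.Adj y z)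
    (hdz : Γ.G.dist x z = m) {C : Finset Γ.V} (hC : C ∈ GD.cliques)
    (hyC : y ∈ C) (hzC : z ∈ C) :
    (∀ w ∈ C, Γ.G.dist x w = m → w = z) ∧
    (∀ w ∈ C, w ≠ z → w ≠ y → Γ.G.Adj y w ∧ Γ.G.dist x w = m + 1) := by
  have hclique := GD.isClique C hC
  have hdist1 : ∀ u ∈ C, ∀ v ∈ C, Γ.G.dist u v ≤ 1 := by
    intro u hu v hv
    by_cases huv : u = v
    · simp [huv, SimpleGraph.dist_self]
    · exact le_of_eq (SimpleGraph.dist_eq_one_iff_adj.mpr (hclique hu hv huv))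
  have hlow : ∀ w ∈ C, m ≤ Γ.G.dist x w := by
    intro w hw
    by_contra hcon
    push_neg at hcon
    have ht : Γ.G.dist x y ≤ Γ.G.dist x w + Γ.G.dist w y := Γ.conn.dist_triangle
    have := hdist1 w hw y hyC
    omega
  have hcard := GD.γ_eq m x C hC hlow ⟨z, hzC, hdz⟩
  rw [hγm] at hcard
  obtain ⟨u, hu⟩ := Finset.card_eq_one.mp hcard
  have hzu : z = u := by
    have : z ∈ C.filter (fun w => Γ.G.dist x w = m) := Finset.mem_filter.mpr ⟨hzC, hdz⟩
    rw [hu] at this; simpa using this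
  have huniq : ∀ w ∈ C, Γ.G.dist x w = m → w = z := by
    intro w hw hdw
    have : w ∈ C.filter (fun w => Γ.G.dist x w = m) := Finset.mem_filter.mpr ⟨hw, hdw⟩
    rw [hu] at this; simp at this; rw [hzu]; exact this
  refine ⟨huniq, ?_⟩
  intro w hw hwz hwy
  have hadjyw : Γ.G.Adj y w := hclique hyC hw (Ne.symm hwy)
  have hupper : Γ.G.dist x w ≤ m + 1 := by
    have ht : Γ.G.dist x w ≤ Γ.G.dist x z + Γ.G.dist z w := Γ.conn.dist_triangle
    have := hdist1 z hzC w hw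
    omega
  have hne : Γ.G.dist x w ≠ m := fun hd => hwz (huniq w hw hd)
  have := hlow w hw
  exact ⟨hadjyw, by omega⟩


lemma key (Γ : DRG) (GD : GeomData Γ) (m : ℕ) (hm : m + 2 ≤ Γ.D) (hγm : GD.γ m = 1) :
    (Γ.a 1 + 1) * Γ.c (m + 1) < Γ.k := by
  classical
  obtain ⟨x₀, y₀, hd⟩ := Γ.diam_eq
  -- b (m+1) ≥ 1
  obtain ⟨t, ht⟩ := my_exists_dist_eq Γ.G Γ.conn Γ.D y₀ hd (m + 2) hm
  obtain ⟨y', hy'adj, hy'⟩ := my_exists_adj_dist Γ.G Γ.conn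
    (show Γ.G.dist x₀ t = (m + 1) + 1 by omega)
  have hb1 : 1 ≤ Γ.b (m + 1) := by
    rw [← Γ.b_eq (m + 1) (by omega) x₀ y' hy']
    refine Finset.card_pos.mpr ⟨t, ?_⟩
    simp only [Finset.mem_filter, SimpleGraph.mem_neighborFinset]
    exact ⟨hy'adj, by omega⟩
  -- a pair at distance m+1
  obtain ⟨y, hy⟩ := my_exists_dist_eq Γ.G Γ.conn Γ.D y₀ hd (m + 1) (by omega)
  set s := Γ.G.neighborFinset y with hs
  set Cset := s.filter (fun z => Γ.G.dist x₀ z = m) with hCset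
  set Aset := s.filter (fun z => Γ.G.dist x₀ z = m + 1) with hAset
  set Bset := s.filter (fun z => Γ.G.dist x₀ z = m + 2) with hBset
  have hrange : ∀ z ∈ s, Γ.G.dist x₀ z = m ∨ Γ.G.dist x₀ z = m + 1 ∨
      Γ.G.dist x₀ z = m + 2 := by
    intro z hz
    rw [hs, SimpleGraph.mem_neighborFinset] at hz
    have h1 : Γ.G.dist y z = 1 := SimpleGraph.dist_eq_one_iff_adj.mpr hz
    have h4 : Γ.G.dist z y = 1 := SimpleGraph.dist_eq_one_iff_adj.mpr hz.symm
    have h2 : Γ.G.dist x₀ z ≤ Γ.G.dist x₀ y + Γ.G.dist y z := Γ.conn.dist_triangle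
    have h3 : Γ.G.dist x₀ y ≤ Γ.G.dist x₀ z + Γ.G.dist z y := Γ.conn.dist_triangle
    omega
  have hks : s.card = Γ.k := by
    have hb0 := Γ.b_eq 0 (Nat.zero_le _) y y (by simp)
    have hfe : s.filter (fun z => Γ.G.dist y z = 0 + 1) = s := by
      refine Finset.filter_eq_self.mpr fun z hz => ?_
      rw [hs, SimpleGraph.mem_neighborFinset] at hz
      simpa using SimpleGraph.dist_eq_one_iff_adj.mpr hz
    rw [DRG.k, ← hb0, hfe]
  have hCc : Cset.card = Γ.c (m + 1) := by
    have := Γ.c_eq (m + 1) (by omega) (by omega) x₀ y hy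
    simpa using this
  have hBc : Bset.card = Γ.b (m + 1) := by
    have := Γ.b_eq (m + 1) (by omega) x₀ y hy
    simpa using this
  have hdCA : Disjoint Cset Aset := by
    rw [Finset.disjoint_left]
    intro w h1 h2
    rw [hCset, Finset.mem_filter] at h1; rw [hAset, Finset.mem_filter] at h2
    omega
  have hdCAB : Disjoint (Cset ∪ Aset) Bset := by
    rw [Finset.disjoint_left]
    intro w h1 h2
    rw [hBset, Finset.mem_filter] at h2
    rcases Finset.mem_union.mp h1 with h | h
    · rw [hCset, Finset.mem_filter] at h; omega
    · rw [hAset, Finset.mem_filter] at h; omega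
  have hU : Cset ∪ Aset ∪ Bset = s := by
    ext w
    simp only [hCset, hAset, hBset, Finset.mem_union, Finset.mem_filter]
    constructor
    · rintro ((⟨h, _⟩ | ⟨h, _⟩) | ⟨h, _⟩) <;> exact h
    · intro hw; rcases hrange w hw with h | h | h <;> simp [hw, h]
  have hsplit : Γ.k = Cset.card + Aset.card + Bset.card := by
    rw [← hks, ← hU, Finset.card_union_of_disjoint hdCAB,
      Finset.card_union_of_disjoint hdCA]
  -- the map sending z ∈ Cset to the rest of the clique through y and z
  set F : Γ.V → Finset Γ.V := fun z =>
    if h : Γ.G.Adj y z then (((GD.edge_unique y z h).choose.erase z).erase y) else ∅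
    with hF
  have hFspec : ∀ z ∈ Cset, ∃ C ∈ GD.cliques, y ∈ C ∧ z ∈ C ∧
      F z = (C.erase z).erase y ∧ ∀ C' ∈ GD.cliques, y ∈ C' → z ∈ C' → C' = C := by
    intro z hz
    have hz' := Finset.mem_filter.mp hz
    have hadj : Γ.G.Adj y z := (SimpleGraph.mem_neighborFinset _ _ _).mp hz'.1
    obtain ⟨⟨hC1, hC2, hC3⟩, hUq⟩ := (GD.edge_unique y z hadj).choose_spec
    refine ⟨_, hC1, hC2, hC3, ?_, fun C' h1 h2 h3 => hUq C' ⟨h1, h2, h3⟩⟩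
    rw [hF]; simp [hadj]
  have hFsub : ∀ z ∈ Cset, F z ⊆ Aset := by
    intro z hz
    obtain ⟨C, hC, hyC, hzC, hFz, _⟩ := hFspec z hz
    have hz' := Finset.mem_filter.mp hz
    have hadj : Γ.G.Adj y z := (SimpleGraph.mem_neighborFinset _ _ _).mp hz'.1
    have hstep := clique_step Γ GD hγm hy hadj hz'.2 hC hyC hzC
    intro w hw
    rw [hFz] at hw
    have hwy : w ≠ y := Finset.ne_of_mem_erase hw
    have hw' := Finset.mem_of_mem_erase hw
    have hwz : w ≠ z := Finset.ne_of_mem_erase hw'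
    have hwC : w ∈ C := Finset.mem_of_mem_erase hw'
    obtain ⟨hadjyw, hdw⟩ := hstep.2 w hwC hwz hwy
    rw [hAset, Finset.mem_filter]
    exact ⟨(SimpleGraph.mem_neighborFinset _ _ _).mpr hadjyw, hdw⟩
  have hFcard : ∀ z ∈ Cset, (F z).card = Γ.a 1 := by
    intro z hz
    obtain ⟨C, hC, hyC, hzC, hFz, _⟩ := hFspec z hz
    have hz' := Finset.mem_filter.mp hz
    have hadj : Γ.G.Adj y z := (SimpleGraph.mem_neighborFinset _ _ _).mp hz'.1
    have hcC := GD.card_eq C hC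
    rw [hFz, Finset.card_erase_of_mem (Finset.mem_erase.mpr ⟨hadj.ne, hyC⟩),
      Finset.card_erase_of_mem hzC, hcC]
    omega
  have hFdisj : ∀ z ∈ Cset, ∀ z' ∈ Cset, z ≠ z' → Disjoint (F z) (F z') := by
    intro z hz z' hz' hne
    rw [Finset.disjoint_left]
    intro w hwz hwz'
    obtain ⟨C, hC, hyC, hzC, hFz, hUq⟩ := hFspec z hz
    obtain ⟨C', hC', hyC', hz'C', hFz', hUq'⟩ := hFspec z' hz'
    rw [hFz] at hwz; rw [hFz'] at hwz'
    have hwy : w ≠ y := Finset.ne_of_mem_erase hwz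
    have hwC : w ∈ C := Finset.mem_of_mem_erase (Finset.mem_of_mem_erase hwz)
    have hwC' : w ∈ C' := Finset.mem_of_mem_erase (Finset.mem_of_mem_erase hwz')
    have hadjyw : Γ.G.Adj y w := GD.isClique C hC hyC hwC (Ne.symm hwy)
    obtain ⟨Cu, hCu, hUqw⟩ := GD.edge_unique y w hadjyw
    have e1 : C = Cu := hUqw C ⟨hC, hyC, hwC⟩
    have e2 : C' = Cu := hUqw C' ⟨hC', hyC', hwC'⟩
    have hadjz : Γ.G.Adj y z :=
      (SimpleGraph.mem_neighborFinset _ _ _).mp (Finset.mem_filter.mp hz).1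
    have hstep := clique_step Γ GD hγm hy hadjz (Finset.mem_filter.mp hz).2 hC hyC hzC
    have hz'C : z' ∈ C := by rw [e1, ← e2]; exact hz'C'
    exact hne (hstep.1 z' hz'C (Finset.mem_filter.mp hz').2).symm
  have hbiU : (Cset.biUnion F).card = Γ.a 1 * Cset.card := by
    rw [Finset.card_biUnion hFdisj]
    calc ∑ z ∈ Cset, (F z).card = ∑ _z ∈ Cset, Γ.a 1 := Finset.sum_congr rfl hFcard
    _ = Cset.card * Γ.a 1 := by rw [Finset.sum_const, smul_eq_mul]
    _ = Γ.a 1 * Cset.card := Nat.mul_comm _ _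
  have hAcard : Γ.a 1 * Cset.card ≤ Aset.card := by
    rw [← hbiU]
    exact Finset.card_le_card (Finset.biUnion_subset.mpr hFsub)
  rw [← hCc, add_mul, one_mul]
  have hBc1 : 1 ≤ Bset.card := hBc ▸ hb1
  generalize hP : Γ.a 1 * Cset.card = P at hAcard ⊢
  omega

/-- if the clique parameters satisfy `γ_i = 1` for `i ≤ m` with
`2 ≤ m ≤ D - 2` and `a_i = c_i a₁` for `i ≤ m`, then `k > (a₁+1) c_{m+1}`; in
particular, if `c_{m+1} ≥ ((a₁+1)^{2(m+1)} - 1)/((a₁+1)² - 1)`, then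
`k > (a₁+1)((a₁+1)^{2(m+1)} - 1)/((a₁+1)² - 1)`. -/
theorem stmt14 (Γ : DRG) (S : SpecData Γ) (GD : GeomData Γ)
    (hk : 3 ≤ Γ.k) (hD : 3 ≤ Γ.D)
    (hθ : S.θ (Fin.last Γ.D) = -(Γ.k : ℝ) / ((Γ.a 1 : ℝ) + 1))
    (m : ℕ) (hm2 : 2 ≤ m) (hmD : m ≤ Γ.D - 2)
    (hγ : ∀ i ≤ m, GD.γ i = 1)
    (ha : ∀ i : ℕ, 1 ≤ i → i ≤ m → Γ.a i = Γ.c i * Γ.a 1) :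
    (Γ.a 1 + 1) * Γ.c (m + 1) < Γ.k ∧
    ((((Γ.a 1 : ℝ) + 1) ^ (2 * (m + 1)) - 1) / (((Γ.a 1 : ℝ) + 1) ^ 2 - 1) ≤
        (Γ.c (m + 1) : ℝ) →
      ((Γ.a 1 : ℝ) + 1) * ((((Γ.a 1 : ℝ) + 1) ^ (2 * (m + 1)) - 1) /
        (((Γ.a 1 : ℝ) + 1) ^ 2 - 1)) < (Γ.k : ℝ)) := by
  have h1 := key Γ GD m (by omega) (hγ m le_rfl)
  refine ⟨h1, fun hE => ?_⟩
  have ha1 : (0 : ℝ) ≤ (Γ.a 1 : ℝ) + 1 := by positivity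
  have h1R : ((Γ.a 1 : ℝ) + 1) * (Γ.c (m + 1) : ℝ) < (Γ.k : ℝ) := by
    exact_mod_cast h1
  calc ((Γ.a 1 : ℝ) + 1) * ((((Γ.a 1 : ℝ) + 1) ^ (2 * (m + 1)) - 1) /
        (((Γ.a 1 : ℝ) + 1) ^ 2 - 1))
      ≤ ((Γ.a 1 : ℝ) + 1) * (Γ.c (m + 1) : ℝ) := mul_le_mul_of_nonneg_left hE ha1
    _ < (Γ.k : ℝ) := h1R
end
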